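/- arXiv:2112.12225 — 6 statements merged into one kernel-verified Lean document; each statement's English description precedes it below -/
import Mathlib

section
/- Let p ∈ (1,2] and δ ∈ [0,∞), and set ω := ω_{p,δ}. Then ω(t) ≤ ω'(t)·t ≤ 2^{p+1}·ω(t) for all t ≥ 0, and (p−1)·ω'(t) ≤ ω''(t)·t ≤ ω'(t) for all t > 0. In particular ω is a balanced N-function with characteristics (p−1, 1) and satisfies the Δ₂-condition with a constant depending only on p, and its complementary function ω* is a balanced N-function with characteristics (1, (p−1)^{−1}) and satisfies the Δ₂-condition with a constant depending only on p. -/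
open Real Set MeasureTheory Filter Matrix

noncomputable section

/-- The N-function `omega_{p,delta}(t) = int_0^t (delta+s)^(p-2) s ds`. -/
def omg (p δ : ℝ) (t : ℝ) : ℝ := ∫ s in (0:ℝ)..t, (δ + s) ^ (p - 2) * s

/-- The `A`-approximation of a function `φ`: it equals `φ` on `[0,A]` and is the
second-order Taylor polynomial of `φ` at `A` for `t > A`. -/
def approxA (φ : ℝ → ℝ) (A : ℝ) (t : ℝ) : ℝ :=
  if t ≤ A then φ t
  else (1/2) * deriv (deriv φ) A * t ^ 2 + (deriv φ A - deriv (deriv φ) A * A) * t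
    + (φ A - deriv φ A * A + (1/2) * deriv (deriv φ) A * A ^ 2)

/-- `φ` is a regular N-function: continuous, convex, positive for `t > 0`,
`φ(t)/t → 0` as `t → 0⁺`, `φ(t)/t → ∞` as `t → ∞`, `C¹` on `[0,∞)`, `C²` on `(0,∞)`,
with `φ'' > 0` on `(0,∞)`. -/
structure IsRegularNFunction (φ : ℝ → ℝ) : Prop where
  continuousOn : ContinuousOn φ (Set.Ici 0)
  convexOn : ConvexOn ℝ (Set.Ici 0) φ
  pos : ∀ t : ℝ, 0 < t → 0 < φ t
  tendsto_zero : Filter.Tendsto (fun t => φ t / t) (nhdsWithin 0 (Set.Ioi 0)) (nhds 0)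
  tendsto_atTop : Filter.Tendsto (fun t => φ t / t) Filter.atTop Filter.atTop
  diffAt : ∀ t : ℝ, 0 < t → DifferentiableAt ℝ φ t
  deriv_continuousOn : ContinuousOn (deriv φ) (Set.Ici 0)
  diffAt2 : ∀ t : ℝ, 0 < t → DifferentiableAt ℝ (deriv φ) t
  deriv2_continuousOn : ContinuousOn (deriv (deriv φ)) (Set.Ioi 0)
  deriv2_pos : ∀ t : ℝ, 0 < t → 0 < deriv (deriv φ) t

/-- `φ` is a balanced N-function with characteristics `(γ₁, γ₂)`:
`γ₁ φ'(t) ≤ t φ''(t) ≤ γ₂ φ'(t)` for all `t > 0`. -/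
structure IsBalanced (φ : ℝ → ℝ) (γ₁ γ₂ : ℝ) : Prop where
  regular : IsRegularNFunction φ
  gamma1_mem : γ₁ ∈ Set.Ioc (0:ℝ) 1
  gamma2_ge : 1 ≤ γ₂
  lower : ∀ t : ℝ, 0 < t → γ₁ * deriv φ t ≤ t * deriv (deriv φ) t
  upper : ∀ t : ℝ, 0 < t → t * deriv (deriv φ) t ≤ γ₂ * deriv φ t

/-- `ψ` satisfies the Δ₂-condition with constant `K`. -/
def SatisfiesDelta2 (ψ : ℝ → ℝ) (K : ℝ) : Prop :=
  2 ≤ K ∧ ∀ t : ℝ, 0 ≤ t → ψ (2 * t) ≤ K * ψ t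

/-- The complementary N-function `φ*(t) = ∫₀ᵗ (φ')⁻¹(s) ds`, where `(φ')⁻¹` is the
inverse on `[0,∞)` of the (strictly increasing) derivative `φ'`. -/
def conj (φ : ℝ → ℝ) (t : ℝ) : ℝ :=
  ∫ s in (0:ℝ)..t, Function.invFunOn (deriv φ) (Set.Ici 0) s

namespace Stmt0Aux

/-- `fd p δ t = (δ+t)^(p-2) * t`, the derivative of `omg p δ`. -/
def fd (p δ t : ℝ) : ℝ := (δ + t) ^ (p - 2) * t

/-- `f2 p δ t = (δ+t)^(p-3) * ((p-1) t + δ)`, the second derivative of `omg p δ`. -/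
def f2 (p δ t : ℝ) : ℝ := (δ + t) ^ (p - 3) * ((p - 1) * t + δ)

/-- The inverse of the derivative of `omg`. -/
def gi (p δ : ℝ) : ℝ → ℝ := Function.invFunOn (deriv (omg p δ)) (Set.Ici 0)

variable {p δ t : ℝ}

lemma fd_zero : fd p δ 0 = 0 := by simp [fd]

lemma fd_nonneg (hδ : 0 ≤ δ) {t : ℝ} (ht : 0 ≤ t) : 0 ≤ fd p δ t :=
  mul_nonneg (Real.rpow_nonneg (by linarith) _) ht

lemma fd_pos (hδ : 0 ≤ δ) {t : ℝ} (ht : 0 < t) : 0 < fd p δ t :=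
  mul_pos (Real.rpow_pos_of_pos (by linarith) _) ht

lemma f2_pos (hp1 : 1 < p) (hδ : 0 ≤ δ) {t : ℝ} (ht : 0 < t) : 0 < f2 p δ t :=
  mul_pos (Real.rpow_pos_of_pos (by linarith) _)
    (by nlinarith [mul_pos (sub_pos.2 hp1) ht])

lemma fd_continuousAt (ht : 0 < δ + t) : ContinuousAt (fd p δ) t :=
  ((continuousAt_const.add continuousAt_id).rpow_const (Or.inl ht.ne')).mul continuousAt_id

lemma f2_continuousAt (hδ : 0 ≤ δ) {t : ℝ} (ht : 0 < t) : ContinuousAt (f2 p δ) t := by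
  have h : (0:ℝ) < δ + t := by linarith
  exact ((continuousAt_const.add continuousAt_id).rpow_const (Or.inl h.ne')).mul
    ((continuousAt_const.mul continuousAt_id).add continuousAt_const)

lemma contf (hp1 : 1 < p) (hδ : 0 ≤ δ) : ContinuousOn (fd p δ) (Set.Ici 0) := by
  intro s hs
  simp only [Set.mem_Ici] at hs
  rcases eq_or_lt_of_le (add_nonneg hδ hs) with h | h
  · have hδ0 : δ = 0 := by nlinarith [h.symm]
    have hs0 : s = 0 := by nlinarith [h.symm]
    subst hδ0; subst hs0
    have h1 : ContinuousWithinAt (fun t : ℝ => t ^ (p - 1)) (Set.Ici 0) 0 :=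
      (Real.continuousAt_rpow_const 0 _ (Or.inr (by linarith))).continuousWithinAt
    apply h1.congr
    · intro y hy
      simp only [Set.mem_Ici] at hy
      rcases eq_or_lt_of_le hy with hy0 | hy0
      · rw [← hy0]
        simp [fd, Real.zero_rpow (by intro hc; linarith : p - 1 ≠ 0)]
      · simp only [fd, zero_add]
        rw [show p - 1 = p - 2 + 1 by ring, Real.rpow_add_one hy0.ne']
    · simp [fd, Real.zero_rpow (by intro hc; linarith : p - 1 ≠ 0)]
  · exact (fd_continuousAt h).continuousWithinAt

lemma hasDerivAt_fd (hδ : 0 ≤ δ) {t : ℝ} (ht : 0 < t) :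
    HasDerivAt (fd p δ) (f2 p δ t) t := by
  have hpos : 0 < δ + t := by linarith
  have h0 : HasDerivAt (fun s : ℝ => δ + s) 1 t := (hasDerivAt_id t).const_add δ
  have h1 : HasDerivAt (fun s : ℝ => (δ + s) ^ (p - 2))
      ((p - 2) * (δ + t) ^ (p - 2 - 1) * 1) t :=
    (Real.hasDerivAt_rpow_const (p := p - 2) (Or.inl hpos.ne')).comp t h0
  have h2 : HasDerivAt (fd p δ) _ t := h1.mul (hasDerivAt_id t)
  convert h2 using 1
  have he : (δ + t) ^ (p - 2) = (δ + t) ^ (p - 3) * (δ + t) := by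
    rw [show p - 2 = p - 3 + 1 by ring, Real.rpow_add_one hpos.ne']
  simp only [f2, he, show p - 2 - 1 = p - 3 by ring, id_eq]
  ring

lemma fd_strictMono (hp1 : 1 < p) (hδ : 0 ≤ δ) : StrictMonoOn (fd p δ) (Set.Ici 0) := by
  apply strictMonoOn_of_deriv_pos (convex_Ici 0) (contf hp1 hδ)
  intro x hx
  rw [interior_Ici] at hx
  rw [(hasDerivAt_fd hδ hx).deriv]
  exact f2_pos hp1 hδ hx

lemma fd_mono (hp1 : 1 < p) (hδ : 0 ≤ δ) {a b : ℝ} (ha : 0 ≤ a) (hab : a ≤ b) :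
    fd p δ a ≤ fd p δ b :=
  (fd_strictMono hp1 hδ).monotoneOn (Set.mem_Ici.2 ha) (Set.mem_Ici.2 (ha.trans hab)) hab

lemma intInt (hp1 : 1 < p) (hδ : 0 ≤ δ) {a b : ℝ} (ha : 0 ≤ a) (hb : 0 ≤ b) :
    IntervalIntegrable (fd p δ) volume a b :=
  ((contf hp1 hδ).mono (by
    intro x hx
    rcases Set.mem_uIcc.1 hx with h | h
    · exact le_trans ha h.1
    · exact le_trans hb h.1)).intervalIntegrable

lemma omg_eq (t : ℝ) : omg p δ t = ∫ s in (0:ℝ)..t, fd p δ s := rfl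

lemma omg_zero : omg p δ 0 = 0 := intervalIntegral.integral_same

lemma hasDerivAt_omg (hp1 : 1 < p) (hδ : 0 ≤ δ) {t : ℝ} (ht : 0 < t) :
    HasDerivAt (omg p δ) (fd p δ t) t := by
  have hmeas := ((contf hp1 hδ).mono Set.Ioi_subset_Ici_self).stronglyMeasurableAtFilter
      isOpen_Ioi (μ := volume) t ht
  exact intervalIntegral.integral_hasDerivAt_right (intInt hp1 hδ le_rfl ht.le) hmeas
    (fd_continuousAt (by linarith))

lemma hasDerivAt_omg_zero (hp1 : 1 < p) (hp2 : p ≤ 2) (hδ : 0 ≤ δ) :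
    HasDerivAt (omg p δ) 0 0 := by
  rw [hasDerivAt_iff_tendsto_slope]
  have hslope : ∀ t : ℝ, slope (omg p δ) 0 t = omg p δ t / t := by
    intro t
    rw [slope_def_field, omg_zero, sub_zero, sub_zero]
  rcases eq_or_lt_of_le hδ with hδ0 | hδ0
  · -- δ = 0
    have hδ0' : δ = 0 := hδ0.symm
    subst hδ0'
    have hb : ∀ t : ℝ, |omg p 0 t| ≤ |t| ^ (p - 1) * |t| := by
      intro t
      have key : ∀ x ∈ Set.uIoc (0:ℝ) t, ‖fd p 0 x‖ ≤ |t| ^ (p - 1) := by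
        intro x hx
        have hx' : |x| ≤ |t| := by
          rcases Set.mem_uIoc.1 hx with h | h
          · rw [abs_of_pos h.1, abs_of_nonneg (le_trans h.1.le h.2)]; exact h.2
          · rw [abs_of_nonpos h.2, abs_of_neg (lt_of_lt_of_le h.1 h.2)]; linarith [h.1]
        have h1 : ‖fd p 0 x‖ ≤ |x| ^ (p - 1) := by
          rcases eq_or_ne x 0 with rfl | hx0
          · simp [fd, Real.zero_rpow (by intro hc; linarith : p - 1 ≠ 0),
              Real.rpow_nonneg]
          · have heq : ‖fd p 0 x‖ = |x ^ (p - 2)| * |x| := by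
              rw [fd, zero_add, Real.norm_eq_abs, abs_mul]
            rw [heq]
            calc |x ^ (p - 2)| * |x| ≤ |x| ^ (p - 2) * |x| :=
                  mul_le_mul_of_nonneg_right (Real.abs_rpow_le_abs_rpow x (p - 2)) (abs_nonneg x)
              _ = |x| ^ (p - 1) := by
                  rw [show p - 1 = p - 2 + 1 by ring,
                    Real.rpow_add_one (abs_ne_zero.2 hx0)]
        exact le_trans h1 (Real.rpow_le_rpow (abs_nonneg x) hx' (by linarith))
      have h2 := intervalIntegral.norm_integral_le_of_norm_le_const key
      rw [← omg_eq] at h2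
      simpa [abs_sub_comm] using h2
    apply squeeze_zero_norm' (a := fun t : ℝ => |t| ^ (p - 1))
    · filter_upwards [self_mem_nhdsWithin] with t ht
      have ht0 : t ≠ 0 := ht
      rw [hslope, Real.norm_eq_abs, abs_div, div_le_iff₀ (abs_pos.2 ht0)]
      exact hb t
    · have h1 : ContinuousAt (fun t : ℝ => |t| ^ (p - 1)) 0 :=
        (continuous_abs.continuousAt).rpow_const (Or.inr (by norm_num; linarith))
      have h2 := h1.tendsto
      simp only [abs_zero, Real.zero_rpow (by intro hc; linarith : p - 1 ≠ 0)] at h2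
      exact h2.mono_left nhdsWithin_le_nhds
  · -- δ > 0
    have hb : ∀ t : ℝ, |t| ≤ δ / 2 → |omg p δ t| ≤ (δ / 2) ^ (p - 2) * |t| * |t| := by
      intro t ht
      have key : ∀ x ∈ Set.uIoc (0:ℝ) t, ‖fd p δ x‖ ≤ (δ / 2) ^ (p - 2) * |t| := by
        intro x hx
        have hx' : |x| ≤ |t| := by
          rcases Set.mem_uIoc.1 hx with h | h
          · rw [abs_of_pos h.1, abs_of_nonneg (le_trans h.1.le h.2)]; exact h.2
          · rw [abs_of_nonpos h.2, abs_of_neg (lt_of_lt_of_le h.1 h.2)]; linarith [h.1]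
        have hdx : δ / 2 ≤ δ + x := by
          have h3 := neg_abs_le x
          have h4 := le_trans hx' ht
          linarith
        have hdx0 : (0:ℝ) < δ + x := by linarith
        have h1 : (δ + x) ^ (p - 2) ≤ (δ / 2) ^ (p - 2) :=
          Real.rpow_le_rpow_of_nonpos (by linarith) hdx (by linarith)
        have heq : ‖fd p δ x‖ = (δ + x) ^ (p - 2) * |x| := by
          rw [fd, Real.norm_eq_abs, abs_mul, abs_of_pos (Real.rpow_pos_of_pos hdx0 _)]
        rw [heq]
        exact mul_le_mul h1 hx' (abs_nonneg x) (Real.rpow_nonneg (by linarith) _)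
      have h2 := intervalIntegral.norm_integral_le_of_norm_le_const key
      rw [← omg_eq] at h2
      simpa [abs_sub_comm, mul_assoc] using h2
    apply squeeze_zero_norm' (a := fun t : ℝ => (δ / 2) ^ (p - 2) * |t|)
    · have hev : ∀ᶠ t : ℝ in nhdsWithin (0:ℝ) {(0:ℝ)}ᶜ, |t| ≤ δ / 2 := by
        have hIoo : Set.Ioo (-(δ/2)) (δ/2) ∈ nhds (0:ℝ) := Ioo_mem_nhds (by linarith) (by linarith)
        filter_upwards [nhdsWithin_le_nhds hIoo] with t ht
        rw [abs_le]; exact ⟨ht.1.le, ht.2.le⟩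
      filter_upwards [hev, self_mem_nhdsWithin] with t ht ht0
      have ht0' : t ≠ 0 := ht0
      rw [hslope, Real.norm_eq_abs, abs_div, div_le_iff₀ (abs_pos.2 ht0')]
      have := hb t ht
      linarith [this]
    · have h1 : Tendsto (fun t : ℝ => (δ / 2) ^ (p - 2) * |t|) (nhds 0) (nhds 0) := by
        have h2 := (continuous_abs.tendsto (0:ℝ)).const_mul ((δ / 2) ^ (p - 2))
        simpa using h2
      exact h1.mono_left nhdsWithin_le_nhds

lemma deriv_omg (hp1 : 1 < p) (hp2 : p ≤ 2) (hδ : 0 ≤ δ) {t : ℝ} (ht : 0 ≤ t) :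
    deriv (omg p δ) t = fd p δ t := by
  rcases eq_or_lt_of_le ht with h | h
  · rw [← h, fd_zero]
    exact (hasDerivAt_omg_zero hp1 hp2 hδ).deriv
  · exact (hasDerivAt_omg hp1 hδ h).deriv

lemma omg_nonneg (hp1 : 1 < p) (hδ : 0 ≤ δ) {t : ℝ} (ht : 0 ≤ t) : 0 ≤ omg p δ t := by
  rw [omg_eq]
  exact intervalIntegral.integral_nonneg ht fun u hu => fd_nonneg hδ hu.1

lemma omg_pos (hp1 : 1 < p) (hδ : 0 ≤ δ) {t : ℝ} (ht : 0 < t) : 0 < omg p δ t := by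
  rw [omg_eq]
  exact intervalIntegral.intervalIntegral_pos_of_pos_on (intInt hp1 hδ le_rfl ht.le)
    (fun x hx => fd_pos hδ hx.1) ht

lemma omg_le_fd_mul (hp1 : 1 < p) (hp2 : p ≤ 2) (hδ : 0 ≤ δ) {t : ℝ} (ht : 0 ≤ t) :
    omg p δ t ≤ fd p δ t * t := by
  rcases eq_or_lt_of_le ht with h | h
  · rw [← h, omg_zero, fd_zero]; simp
  · have h1 : omg p δ t ≤ ∫ _ in (0:ℝ)..t, fd p δ t := by
      rw [omg_eq]
      apply intervalIntegral.integral_mono_on h.le (intInt hp1 hδ le_rfl h.le)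
        intervalIntegrable_const
      intro x hx
      exact fd_mono hp1 hδ hx.1 hx.2
    rw [intervalIntegral.integral_const, smul_eq_mul, sub_zero, mul_comm] at h1
    exact h1

lemma fd_mul_le (hp1 : 1 < p) (hp2 : p ≤ 2) (hδ : 0 ≤ δ) {t : ℝ} (ht : 0 ≤ t) :
    fd p δ t * t ≤ 4 * omg p δ t := by
  rcases eq_or_lt_of_le ht with h | h
  · rw [← h, fd_zero, omg_zero]; simp
  · have ht2 : (0:ℝ) < t / 2 := by linarith
    have key1 : (δ + t) ^ (p - 2) ≤ (δ + t / 2) ^ (p - 2) :=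
      Real.rpow_le_rpow_of_nonpos (by linarith) (by linarith) (by linarith)
    have hint1 : IntervalIntegrable (fd p δ) volume 0 (t/2) := intInt hp1 hδ le_rfl ht2.le
    have hint2 : IntervalIntegrable (fd p δ) volume (t/2) t := intInt hp1 hδ ht2.le h.le
    have hsplit : omg p δ t = (∫ s in (0:ℝ)..(t/2), fd p δ s) + ∫ s in (t/2)..t, fd p δ s := by
      rw [omg_eq, ← intervalIntegral.integral_add_adjacent_intervals hint1 hint2]
    have h1 : 0 ≤ ∫ s in (0:ℝ)..(t/2), fd p δ s :=
      intervalIntegral.integral_nonneg ht2.le fun u hu => fd_nonneg hδ hu.1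
    have h2 : (∫ _ in (t/2)..t, fd p δ (t/2)) ≤ ∫ s in (t/2)..t, fd p δ s := by
      apply intervalIntegral.integral_mono_on (by linarith) intervalIntegrable_const hint2
      intro x hx
      exact fd_mono hp1 hδ ht2.le hx.1
    rw [intervalIntegral.integral_const, smul_eq_mul] at h2
    have e : t - t / 2 = t / 2 := by ring
    rw [e] at h2
    have h3 : (δ + t) ^ (p - 2) * (t/2) ≤ fd p δ (t/2) := by
      simp only [fd]
      exact mul_le_mul_of_nonneg_right key1 ht2.le
    have h5 : t / 2 * ((δ + t) ^ (p - 2) * (t/2)) ≤ t / 2 * fd p δ (t/2) :=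
      mul_le_mul_of_nonneg_left h3 ht2.le
    have h6 : t / 2 * ((δ + t) ^ (p - 2) * (t/2)) ≤ omg p δ t := by
      rw [hsplit]; linarith
    calc fd p δ t * t = 4 * (t / 2 * ((δ + t) ^ (p - 2) * (t/2))) := by
          simp only [fd]; ring
      _ ≤ 4 * omg p δ t := by linarith

lemma derivOmg_eventuallyEq (hp1 : 1 < p) (hp2 : p ≤ 2) (hδ : 0 ≤ δ) {t : ℝ} (ht : 0 < t) :
    deriv (omg p δ) =ᶠ[nhds t] fd p δ :=
  Filter.eventuallyEq_of_mem (Ioi_mem_nhds ht) fun x hx => deriv_omg hp1 hp2 hδ (le_of_lt hx)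

lemma hasDerivAt_deriv_omg (hp1 : 1 < p) (hp2 : p ≤ 2) (hδ : 0 ≤ δ) {t : ℝ} (ht : 0 < t) :
    HasDerivAt (deriv (omg p δ)) (f2 p δ t) t :=
  (hasDerivAt_fd hδ ht).congr_of_eventuallyEq (derivOmg_eventuallyEq hp1 hp2 hδ ht)

lemma deriv2_omg (hp1 : 1 < p) (hp2 : p ≤ 2) (hδ : 0 ≤ δ) {t : ℝ} (ht : 0 < t) :
    deriv (deriv (omg p δ)) t = f2 p δ t := (hasDerivAt_deriv_omg hp1 hp2 hδ ht).deriv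

lemma key_upper (hp1 : 1 < p) (hp2 : p ≤ 2) (hδ : 0 ≤ δ) {t : ℝ} (ht : 0 < t) :
    t * f2 p δ t ≤ fd p δ t := by
  have hne : δ + t ≠ 0 := ne_of_gt (by linarith)
  have hA : (0:ℝ) < (δ + t) ^ (p - 3) := Real.rpow_pos_of_pos (by linarith) _
  have hfd : fd p δ t = (δ + t) ^ (p - 3) * ((δ + t) * t) := by
    rw [fd, show p - 2 = p - 3 + 1 by ring, Real.rpow_add_one hne]; ring
  rw [hfd, f2]
  nlinarith [mul_nonneg (mul_nonneg hA.le (mul_pos ht ht).le) (by linarith : (0:ℝ) ≤ 2 - p)]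

lemma key_lower (hp1 : 1 < p) (hp2 : p ≤ 2) (hδ : 0 ≤ δ) {t : ℝ} (ht : 0 < t) :
    (p - 1) * fd p δ t ≤ t * f2 p δ t := by
  have hne : δ + t ≠ 0 := ne_of_gt (by linarith)
  have hA : (0:ℝ) < (δ + t) ^ (p - 3) := Real.rpow_pos_of_pos (by linarith) _
  have hfd : fd p δ t = (δ + t) ^ (p - 3) * ((δ + t) * t) := by
    rw [fd, show p - 2 = p - 3 + 1 by ring, Real.rpow_add_one hne]; ring
  rw [hfd, f2]
  nlinarith [mul_nonneg (mul_nonneg hA.le ht.le) (mul_nonneg hδ (by linarith : (0:ℝ) ≤ 2 - p))]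

lemma fd_tendsto_atTop (hp1 : 1 < p) (hp2 : p ≤ 2) (hδ : 0 ≤ δ) :
    Tendsto (fd p δ) atTop atTop := by
  have hc : (0:ℝ) < (1 + δ) ^ (p - 2) := Real.rpow_pos_of_pos (by linarith) _
  have hbase : Tendsto (fun t : ℝ => (1 + δ) ^ (p - 2) * t ^ (p - 1)) atTop atTop :=
    (tendsto_rpow_atTop (by linarith)).const_mul_atTop hc
  apply tendsto_atTop_mono' atTop ?_ hbase
  filter_upwards [eventually_ge_atTop (1:ℝ)] with t ht
  have ht0 : (0:ℝ) < t := by linarith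
  have h1 : δ + t ≤ (1 + δ) * t := by nlinarith
  have h2 : ((1 + δ) * t) ^ (p - 2) ≤ (δ + t) ^ (p - 2) :=
    Real.rpow_le_rpow_of_nonpos (by nlinarith) h1 (by linarith)
  have h3 : ((1 + δ) * t) ^ (p - 2) = (1 + δ) ^ (p - 2) * t ^ (p - 2) :=
    Real.mul_rpow (by linarith) ht0.le
  have h4 : (1 + δ) ^ (p - 2) * t ^ (p - 1) = ((1 + δ) ^ (p - 2) * t ^ (p - 2)) * t := by
    rw [show p - 1 = p - 2 + 1 by ring, Real.rpow_add_one ht0.ne']; ring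
  simp only [fd]
  rw [h4, ← h3]
  exact mul_le_mul_of_nonneg_right h2 ht0.le

lemma omg_continuousOn (hp1 : 1 < p) (hp2 : p ≤ 2) (hδ : 0 ≤ δ) :
    ContinuousOn (omg p δ) (Set.Ici 0) := by
  intro t ht
  rcases eq_or_lt_of_le (Set.mem_Ici.1 ht) with h | h
  · rw [← h]
    exact (hasDerivAt_omg_zero hp1 hp2 hδ).continuousAt.continuousWithinAt
  · exact (hasDerivAt_omg hp1 hδ h).continuousAt.continuousWithinAt

lemma omg_convexOn (hp1 : 1 < p) (hp2 : p ≤ 2) (hδ : 0 ≤ δ) :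
    ConvexOn ℝ (Set.Ici 0) (omg p δ) := by
  have hd : DifferentiableOn ℝ (omg p δ) (interior (Set.Ici (0:ℝ))) := by
    rw [interior_Ici]
    exact fun x hx => (hasDerivAt_omg hp1 hδ (Set.mem_Ioi.1 hx)).differentiableAt.differentiableWithinAt
  have hm : MonotoneOn (deriv (omg p δ)) (interior (Set.Ici (0:ℝ))) := by
    rw [interior_Ici]
    intro a ha b hb hab
    rw [deriv_omg hp1 hp2 hδ (le_of_lt (Set.mem_Ioi.1 ha)),
      deriv_omg hp1 hp2 hδ (le_of_lt (Set.mem_Ioi.1 hb))]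
    exact fd_mono hp1 hδ (le_of_lt (Set.mem_Ioi.1 ha)) hab
  exact MonotoneOn.convexOn_of_deriv (convex_Ici 0) (omg_continuousOn hp1 hp2 hδ) hd hm

lemma omg_tendsto_zero (hp1 : 1 < p) (hp2 : p ≤ 2) (hδ : 0 ≤ δ) :
    Tendsto (fun t => omg p δ t / t) (nhdsWithin 0 (Set.Ioi 0)) (nhds 0) := by
  have hfd0 : Tendsto (fd p δ) (nhdsWithin 0 (Set.Ioi 0)) (nhds 0) := by
    have h := (contf hp1 hδ) 0 Set.self_mem_Ici
    have h2 := h.tendsto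
    rw [fd_zero] at h2
    exact h2.mono_left (nhdsWithin_mono _ Set.Ioi_subset_Ici_self)
  apply tendsto_of_tendsto_of_tendsto_of_le_of_le' tendsto_const_nhds hfd0
  · filter_upwards [self_mem_nhdsWithin] with t ht
    exact div_nonneg (omg_nonneg hp1 hδ (le_of_lt ht)) (le_of_lt ht)
  · filter_upwards [self_mem_nhdsWithin] with t ht
    rw [div_le_iff₀ ht]
    exact omg_le_fd_mul hp1 hp2 hδ (le_of_lt ht)

lemma omg_tendsto_atTop (hp1 : 1 < p) (hp2 : p ≤ 2) (hδ : 0 ≤ δ) :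
    Tendsto (fun t => omg p δ t / t) atTop atTop := by
  have h4 : Tendsto (fun t => fd p δ t / 4) atTop atTop :=
    Tendsto.atTop_div_const (by norm_num) (fd_tendsto_atTop hp1 hp2 hδ)
  apply tendsto_atTop_mono' atTop ?_ h4
  filter_upwards [eventually_gt_atTop (0:ℝ)] with t ht
  rw [div_le_div_iff₀ (by norm_num) ht]
  have := fd_mul_le hp1 hp2 hδ ht.le
  linarith

lemma regular_omg (hp1 : 1 < p) (hp2 : p ≤ 2) (hδ : 0 ≤ δ) :
    IsRegularNFunction (omg p δ) where
  continuousOn := omg_continuousOn hp1 hp2 hδ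
  convexOn := omg_convexOn hp1 hp2 hδ
  pos := fun t ht => omg_pos hp1 hδ ht
  tendsto_zero := omg_tendsto_zero hp1 hp2 hδ
  tendsto_atTop := omg_tendsto_atTop hp1 hp2 hδ
  diffAt := fun t ht => (hasDerivAt_omg hp1 hδ ht).differentiableAt
  deriv_continuousOn :=
    (contf hp1 hδ).congr fun t ht => deriv_omg hp1 hp2 hδ (Set.mem_Ici.1 ht)
  diffAt2 := fun t ht => (hasDerivAt_deriv_omg hp1 hp2 hδ ht).differentiableAt
  deriv2_continuousOn :=
    ContinuousOn.congr
      (fun t ht => (f2_continuousAt hδ (Set.mem_Ioi.1 ht)).continuousWithinAt)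
      (fun t ht => deriv2_omg hp1 hp2 hδ (Set.mem_Ioi.1 ht))
  deriv2_pos := fun t ht => by
    rw [deriv2_omg hp1 hp2 hδ ht]; exact f2_pos hp1 hδ ht

lemma delta2_omg (hp1 : 1 < p) (hp2 : p ≤ 2) (hδ : 0 ≤ δ) :
    SatisfiesDelta2 (omg p δ) 16 := by
  refine ⟨by norm_num, fun t ht => ?_⟩
  rcases eq_or_lt_of_le ht with h | h
  · rw [← h]
    simp [omg_zero]
  · have h1 := omg_le_fd_mul hp1 hp2 hδ (by linarith : (0:ℝ) ≤ 2 * t)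
    have h2 := fd_mul_le hp1 hp2 hδ h.le
    have h3 : (δ + 2 * t) ^ (p - 2) ≤ (δ + t) ^ (p - 2) :=
      Real.rpow_le_rpow_of_nonpos (by linarith) (by linarith) (by linarith)
    have h4 : fd p δ (2 * t) * (2 * t) ≤ 4 * (fd p δ t * t) := by
      simp only [fd]
      nlinarith [mul_le_mul_of_nonneg_right h3
        (by positivity : (0:ℝ) ≤ 4 * (t * t))]
    linarith

/-! ### The complementary function -/

lemma exists_deriv_eq (hp1 : 1 < p) (hp2 : p ≤ 2) (hδ : 0 ≤ δ) {y : ℝ} (hy : 0 ≤ y) :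
    ∃ a ∈ Set.Ici (0:ℝ), deriv (omg p δ) a = y := by
  obtain ⟨b, hb⟩ := (((fd_tendsto_atTop hp1 hp2 hδ).eventually_ge_atTop y).and
    (eventually_ge_atTop (0:ℝ))).exists
  have hmem : y ∈ Set.Icc (fd p δ 0) (fd p δ b) := by
    rw [fd_zero]; exact ⟨hy, hb.1⟩
  obtain ⟨a, ha, hay⟩ := intermediate_value_Icc hb.2
    ((contf hp1 hδ).mono Set.Icc_subset_Ici_self) hmem
  exact ⟨a, Set.mem_Ici.2 ha.1, by rw [deriv_omg hp1 hp2 hδ ha.1]; exact hay⟩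

lemma gi_nonneg (hp1 : 1 < p) (hp2 : p ≤ 2) (hδ : 0 ≤ δ) {y : ℝ} (hy : 0 ≤ y) :
    0 ≤ gi p δ y :=
  Function.invFunOn_mem (exists_deriv_eq hp1 hp2 hδ hy)

lemma deriv_omg_gi (hp1 : 1 < p) (hp2 : p ≤ 2) (hδ : 0 ≤ δ) {y : ℝ} (hy : 0 ≤ y) :
    deriv (omg p δ) (gi p δ y) = y :=
  Function.invFunOn_eq (exists_deriv_eq hp1 hp2 hδ hy)

lemma fd_gi_eq (hp1 : 1 < p) (hp2 : p ≤ 2) (hδ : 0 ≤ δ) {y : ℝ} (hy : 0 ≤ y) :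
    fd p δ (gi p δ y) = y := by
  rw [← deriv_omg hp1 hp2 hδ (gi_nonneg hp1 hp2 hδ hy)]
  exact deriv_omg_gi hp1 hp2 hδ hy

lemma gi_fd_eq (hp1 : 1 < p) (hp2 : p ≤ 2) (hδ : 0 ≤ δ) {s : ℝ} (hs : 0 ≤ s) :
    gi p δ (fd p δ s) = s := by
  have hinj : Set.InjOn (deriv (omg p δ)) (Set.Ici 0) := by
    intro a ha b hb hab
    rw [deriv_omg hp1 hp2 hδ (Set.mem_Ici.1 ha), deriv_omg hp1 hp2 hδ (Set.mem_Ici.1 hb)] at hab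
    exact (fd_strictMono hp1 hδ).injOn ha hb hab
  have h := hinj.leftInvOn_invFunOn (Set.mem_Ici.2 hs)
  rw [← deriv_omg hp1 hp2 hδ hs]
  exact h

lemma gi_zero (hp1 : 1 < p) (hp2 : p ≤ 2) (hδ : 0 ≤ δ) : gi p δ 0 = 0 := by
  have h := gi_fd_eq hp1 hp2 hδ (le_refl (0:ℝ))
  rwa [fd_zero] at h

lemma gi_mono (hp1 : 1 < p) (hp2 : p ≤ 2) (hδ : 0 ≤ δ) {a b : ℝ} (ha : 0 ≤ a) (hab : a ≤ b) :
    gi p δ a ≤ gi p δ b := by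
  by_contra hc
  push_neg at hc
  have h := (fd_strictMono hp1 hδ) (Set.mem_Ici.2 (gi_nonneg hp1 hp2 hδ (ha.trans hab)))
    (Set.mem_Ici.2 (gi_nonneg hp1 hp2 hδ ha)) hc
  rw [fd_gi_eq hp1 hp2 hδ (ha.trans hab), fd_gi_eq hp1 hp2 hδ ha] at h
  linarith

lemma gi_pos (hp1 : 1 < p) (hp2 : p ≤ 2) (hδ : 0 ≤ δ) {y : ℝ} (hy : 0 < y) :
    0 < gi p δ y := by
  rcases eq_or_lt_of_le (gi_nonneg hp1 hp2 hδ hy.le) with h | h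
  · exfalso
    have h2 := fd_gi_eq hp1 hp2 hδ hy.le
    rw [← h, fd_zero] at h2
    linarith
  · exact h

lemma gi_lt_of_lt_fd (hp1 : 1 < p) (hp2 : p ≤ 2) (hδ : 0 ≤ δ) {y b : ℝ}
    (hy : 0 ≤ y) (hb : 0 ≤ b) (h : y < fd p δ b) : gi p δ y < b := by
  by_contra hc
  push_neg at hc
  have h2 := (fd_strictMono hp1 hδ).monotoneOn (Set.mem_Ici.2 hb)
    (Set.mem_Ici.2 (gi_nonneg hp1 hp2 hδ hy)) hc
  rw [fd_gi_eq hp1 hp2 hδ hy] at h2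
  linarith

lemma lt_gi_of_fd_lt (hp1 : 1 < p) (hp2 : p ≤ 2) (hδ : 0 ≤ δ) {a y : ℝ}
    (ha : 0 ≤ a) (hy : 0 ≤ y) (h : fd p δ a < y) : a < gi p δ y := by
  by_contra hc
  push_neg at hc
  have h2 := (fd_strictMono hp1 hδ).monotoneOn
    (Set.mem_Ici.2 (gi_nonneg hp1 hp2 hδ hy)) (Set.mem_Ici.2 ha) hc
  rw [fd_gi_eq hp1 hp2 hδ hy] at h2
  linarith

lemma gi_continuousAt (hp1 : 1 < p) (hp2 : p ≤ 2) (hδ : 0 ≤ δ) {t : ℝ} (ht : 0 < t) :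
    ContinuousAt (gi p δ) t := by
  have key : Tendsto (gi p δ) (nhds t) (nhds (gi p δ t)) := by
    apply tendsto_order.2
    constructor
    · intro a ha
      rcases lt_or_ge a 0 with ha0 | ha0
      · filter_upwards [eventually_gt_nhds ht] with y hy
        exact lt_of_lt_of_le ha0 (gi_nonneg hp1 hp2 hδ hy.le)
      · have h1 : fd p δ a < t := by
          have h2 := (fd_strictMono hp1 hδ) (Set.mem_Ici.2 ha0)
            (Set.mem_Ici.2 (gi_nonneg hp1 hp2 hδ ht.le)) ha
          rwa [fd_gi_eq hp1 hp2 hδ ht.le] at h2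
        have h3 : 0 ≤ fd p δ a := fd_nonneg hδ ha0
        filter_upwards [eventually_gt_nhds h1] with y hy
        exact lt_gi_of_fd_lt hp1 hp2 hδ ha0 (le_trans h3 hy.le) hy
    · intro b hb
      have hb0 : 0 ≤ b := le_trans (gi_nonneg hp1 hp2 hδ ht.le) hb.le
      have h1 : t < fd p δ b := by
        have h2 := (fd_strictMono hp1 hδ) (Set.mem_Ici.2 (gi_nonneg hp1 hp2 hδ ht.le))
          (Set.mem_Ici.2 hb0) hb
        rwa [fd_gi_eq hp1 hp2 hδ ht.le] at h2
      filter_upwards [eventually_lt_nhds h1, eventually_gt_nhds ht] with y hy1 hy2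
      exact gi_lt_of_lt_fd hp1 hp2 hδ hy2.le hb0 hy1
  exact key

lemma gi_tendsto_zero (hp1 : 1 < p) (hp2 : p ≤ 2) (hδ : 0 ≤ δ) :
    Tendsto (gi p δ) (nhdsWithin 0 (Set.Ici 0)) (nhds 0) := by
  apply tendsto_order.2
  constructor
  · intro a ha
    filter_upwards [self_mem_nhdsWithin] with y hy
    exact lt_of_lt_of_le ha (gi_nonneg hp1 hp2 hδ hy)
  · intro b hb
    have hfb : 0 < fd p δ b := fd_pos hδ hb
    filter_upwards [self_mem_nhdsWithin, nhdsWithin_le_nhds (Iio_mem_nhds hfb)] with y hy1 hy2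
    exact gi_lt_of_lt_fd hp1 hp2 hδ hy1 hb.le hy2

lemma gi_monotoneOn (hp1 : 1 < p) (hp2 : p ≤ 2) (hδ : 0 ≤ δ) :
    MonotoneOn (gi p δ) (Set.Ici 0) :=
  fun a ha _ _ hab => gi_mono hp1 hp2 hδ (Set.mem_Ici.1 ha) hab

lemma gi_intInt (hp1 : 1 < p) (hp2 : p ≤ 2) (hδ : 0 ≤ δ) {a b : ℝ} (ha : 0 ≤ a) (hb : 0 ≤ b) :
    IntervalIntegrable (gi p δ) volume a b :=
  ((gi_monotoneOn hp1 hp2 hδ).mono (by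
    intro x hx
    rcases Set.mem_uIcc.1 hx with h | h
    · exact Set.mem_Ici.2 (le_trans ha h.1)
    · exact Set.mem_Ici.2 (le_trans hb h.1))).intervalIntegrable

lemma conj_eq (t : ℝ) : conj (omg p δ) t = ∫ s in (0:ℝ)..t, gi p δ s := rfl

lemma conj_zero : conj (omg p δ) 0 = 0 := intervalIntegral.integral_same

lemma hasDerivAt_conj (hp1 : 1 < p) (hp2 : p ≤ 2) (hδ : 0 ≤ δ) {t : ℝ} (ht : 0 < t) :
    HasDerivAt (conj (omg p δ)) (gi p δ t) t := by
  have hcont : ContinuousOn (gi p δ) (Set.Ioi 0) :=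
    fun x hx => (gi_continuousAt hp1 hp2 hδ (Set.mem_Ioi.1 hx)).continuousWithinAt
  exact intervalIntegral.integral_hasDerivAt_right (gi_intInt hp1 hp2 hδ le_rfl ht.le)
    (hcont.stronglyMeasurableAtFilter isOpen_Ioi t ht) (gi_continuousAt hp1 hp2 hδ ht)

lemma conj_nonneg (hp1 : 1 < p) (hp2 : p ≤ 2) (hδ : 0 ≤ δ) {t : ℝ} (ht : 0 ≤ t) :
    0 ≤ conj (omg p δ) t := by
  rw [conj_eq]
  exact intervalIntegral.integral_nonneg ht fun u hu => gi_nonneg hp1 hp2 hδ hu.1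

lemma conj_pos (hp1 : 1 < p) (hp2 : p ≤ 2) (hδ : 0 ≤ δ) {t : ℝ} (ht : 0 < t) :
    0 < conj (omg p δ) t := by
  rw [conj_eq]
  exact intervalIntegral.intervalIntegral_pos_of_pos_on (gi_intInt hp1 hp2 hδ le_rfl ht.le)
    (fun x hx => gi_pos hp1 hp2 hδ hx.1) ht

lemma conj_le (hp1 : 1 < p) (hp2 : p ≤ 2) (hδ : 0 ≤ δ) {t : ℝ} (ht : 0 ≤ t) :
    conj (omg p δ) t ≤ gi p δ t * t := by
  rcases eq_or_lt_of_le ht with h | h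
  · rw [← h, conj_zero]; simp
  · have h1 : conj (omg p δ) t ≤ ∫ _ in (0:ℝ)..t, gi p δ t := by
      rw [conj_eq]
      apply intervalIntegral.integral_mono_on h.le (gi_intInt hp1 hp2 hδ le_rfl h.le)
        intervalIntegrable_const
      intro x hx
      exact gi_mono hp1 hp2 hδ hx.1 hx.2
    rw [intervalIntegral.integral_const, smul_eq_mul, sub_zero, mul_comm] at h1
    exact h1

lemma conj_ge (hp1 : 1 < p) (hp2 : p ≤ 2) (hδ : 0 ≤ δ) {t : ℝ} (ht : 0 < t) :
    gi p δ (t/2) * (t/2) ≤ conj (omg p δ) t := by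
  have ht2 : (0:ℝ) < t / 2 := by linarith
  have hi1 := gi_intInt hp1 hp2 hδ le_rfl ht2.le
  have hi2 := gi_intInt hp1 hp2 hδ ht2.le ht.le
  have hsplit : conj (omg p δ) t
      = (∫ s in (0:ℝ)..(t/2), gi p δ s) + ∫ s in (t/2)..t, gi p δ s := by
    rw [conj_eq, ← intervalIntegral.integral_add_adjacent_intervals hi1 hi2]
  have h1 : 0 ≤ ∫ s in (0:ℝ)..(t/2), gi p δ s :=
    intervalIntegral.integral_nonneg ht2.le fun u hu => gi_nonneg hp1 hp2 hδ hu.1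
  have h2 : (∫ _ in (t/2)..t, gi p δ (t/2)) ≤ ∫ s in (t/2)..t, gi p δ s := by
    apply intervalIntegral.integral_mono_on (by linarith) intervalIntegrable_const hi2
    intro x hx
    exact gi_mono hp1 hp2 hδ ht2.le hx.1
  rw [intervalIntegral.integral_const, smul_eq_mul] at h2
  have e : t - t / 2 = t / 2 := by ring
  rw [e] at h2
  rw [hsplit, mul_comm]
  linarith

lemma deriv_conj (hp1 : 1 < p) (hp2 : p ≤ 2) (hδ : 0 ≤ δ) {t : ℝ} (ht : 0 < t) :
    deriv (conj (omg p δ)) t = gi p δ t :=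
  (hasDerivAt_conj hp1 hp2 hδ ht).deriv

lemma deriv_conj_zero (hp1 : 1 < p) (hp2 : p ≤ 2) (hδ : 0 ≤ δ) :
    deriv (conj (omg p δ)) 0 = 0 := by
  by_cases hd : DifferentiableAt ℝ (conj (omg p δ)) 0
  · have h1 : Tendsto (slope (conj (omg p δ)) 0) (nhdsWithin 0 (Set.Ioi 0))
        (nhds (deriv (conj (omg p δ)) 0)) :=
      (hasDerivAt_iff_tendsto_slope.1 hd.hasDerivAt).mono_left
        (nhdsWithin_mono _ fun x hx => Set.mem_compl_singleton_iff.2 (ne_of_gt hx))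
    have h2 : Tendsto (slope (conj (omg p δ)) 0) (nhdsWithin 0 (Set.Ioi 0)) (nhds 0) := by
      have hgi : Tendsto (gi p δ) (nhdsWithin 0 (Set.Ioi 0)) (nhds 0) :=
        (gi_tendsto_zero hp1 hp2 hδ).mono_left (nhdsWithin_mono _ Set.Ioi_subset_Ici_self)
      apply tendsto_of_tendsto_of_tendsto_of_le_of_le' tendsto_const_nhds hgi
      · filter_upwards [self_mem_nhdsWithin] with u hu
        rw [slope_def_field, conj_zero, sub_zero, sub_zero]
        exact div_nonneg (conj_nonneg hp1 hp2 hδ (le_of_lt hu)) (le_of_lt hu)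
      · filter_upwards [self_mem_nhdsWithin] with u hu
        rw [slope_def_field, conj_zero, sub_zero, sub_zero, div_le_iff₀ hu]
        exact conj_le hp1 hp2 hδ (le_of_lt hu)
    exact tendsto_nhds_unique h1 h2
  · exact deriv_zero_of_not_differentiableAt hd

lemma deriv_conj_eq (hp1 : 1 < p) (hp2 : p ≤ 2) (hδ : 0 ≤ δ) {t : ℝ} (ht : 0 ≤ t) :
    deriv (conj (omg p δ)) t = gi p δ t := by
  rcases eq_or_lt_of_le ht with h | h
  · rw [← h, deriv_conj_zero hp1 hp2 hδ, gi_zero hp1 hp2 hδ]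
  · exact deriv_conj hp1 hp2 hδ h

lemma hasDerivAt_gi (hp1 : 1 < p) (hp2 : p ≤ 2) (hδ : 0 ≤ δ) {t : ℝ} (ht : 0 < t) :
    HasDerivAt (gi p δ) (f2 p δ (gi p δ t))⁻¹ t := by
  have hg0 : 0 < gi p δ t := gi_pos hp1 hp2 hδ ht
  refine HasDerivAt.of_local_left_inverse (gi_continuousAt hp1 hp2 hδ ht)
    (hasDerivAt_deriv_omg hp1 hp2 hδ hg0) (f2_pos hp1 hδ hg0).ne' ?_
  filter_upwards [eventually_gt_nhds ht] with y hy
  exact deriv_omg_gi hp1 hp2 hδ hy.le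

lemma derivConj_eventuallyEq (hp1 : 1 < p) (hp2 : p ≤ 2) (hδ : 0 ≤ δ) {t : ℝ} (ht : 0 < t) :
    deriv (conj (omg p δ)) =ᶠ[nhds t] gi p δ :=
  Filter.eventuallyEq_of_mem (Ioi_mem_nhds ht) fun x hx => deriv_conj hp1 hp2 hδ hx

lemma hasDerivAt_deriv_conj (hp1 : 1 < p) (hp2 : p ≤ 2) (hδ : 0 ≤ δ) {t : ℝ} (ht : 0 < t) :
    HasDerivAt (deriv (conj (omg p δ))) (f2 p δ (gi p δ t))⁻¹ t :=
  (hasDerivAt_gi hp1 hp2 hδ ht).congr_of_eventuallyEq (derivConj_eventuallyEq hp1 hp2 hδ ht)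

lemma deriv2_conj (hp1 : 1 < p) (hp2 : p ≤ 2) (hδ : 0 ≤ δ) {t : ℝ} (ht : 0 < t) :
    deriv (deriv (conj (omg p δ))) t = (f2 p δ (gi p δ t))⁻¹ :=
  (hasDerivAt_deriv_conj hp1 hp2 hδ ht).deriv

lemma conj_continuousOn (hp1 : 1 < p) (hp2 : p ≤ 2) (hδ : 0 ≤ δ) :
    ContinuousOn (conj (omg p δ)) (Set.Ici 0) := by
  intro t ht
  rcases eq_or_lt_of_le (Set.mem_Ici.1 ht) with h | h
  · rw [← h]
    have key : Tendsto (conj (omg p δ)) (nhdsWithin 0 (Set.Ici 0))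
        (nhds (conj (omg p δ) 0)) := by
      rw [conj_zero]
      have hb : Tendsto (fun y => gi p δ y * y) (nhdsWithin 0 (Set.Ici 0)) (nhds 0) := by
        have h2 := (gi_tendsto_zero hp1 hp2 hδ).mul
          (tendsto_id.mono_left (nhdsWithin_le_nhds (s := Set.Ici (0:ℝ))))
        simpa using h2
      apply tendsto_of_tendsto_of_tendsto_of_le_of_le' tendsto_const_nhds hb
      · filter_upwards [self_mem_nhdsWithin] with y hy
        exact conj_nonneg hp1 hp2 hδ hy
      · filter_upwards [self_mem_nhdsWithin] with y hy
        exact conj_le hp1 hp2 hδ hy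
    exact key
  · exact (hasDerivAt_conj hp1 hp2 hδ h).continuousAt.continuousWithinAt

lemma conj_convexOn (hp1 : 1 < p) (hp2 : p ≤ 2) (hδ : 0 ≤ δ) :
    ConvexOn ℝ (Set.Ici 0) (conj (omg p δ)) := by
  have hd : DifferentiableOn ℝ (conj (omg p δ)) (interior (Set.Ici (0:ℝ))) := by
    rw [interior_Ici]
    exact fun x hx =>
      (hasDerivAt_conj hp1 hp2 hδ (Set.mem_Ioi.1 hx)).differentiableAt.differentiableWithinAt
  have hm : MonotoneOn (deriv (conj (omg p δ))) (interior (Set.Ici (0:ℝ))) := by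
    rw [interior_Ici]
    intro a ha b hb hab
    rw [deriv_conj hp1 hp2 hδ (Set.mem_Ioi.1 ha), deriv_conj hp1 hp2 hδ (Set.mem_Ioi.1 hb)]
    exact gi_mono hp1 hp2 hδ (le_of_lt (Set.mem_Ioi.1 ha)) hab
  exact MonotoneOn.convexOn_of_deriv (convex_Ici 0) (conj_continuousOn hp1 hp2 hδ) hd hm

lemma conj_tendsto_zero (hp1 : 1 < p) (hp2 : p ≤ 2) (hδ : 0 ≤ δ) :
    Tendsto (fun t => conj (omg p δ) t / t) (nhdsWithin 0 (Set.Ioi 0)) (nhds 0) := by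
  have hgi : Tendsto (gi p δ) (nhdsWithin 0 (Set.Ioi 0)) (nhds 0) :=
    (gi_tendsto_zero hp1 hp2 hδ).mono_left (nhdsWithin_mono _ Set.Ioi_subset_Ici_self)
  apply tendsto_of_tendsto_of_tendsto_of_le_of_le' tendsto_const_nhds hgi
  · filter_upwards [self_mem_nhdsWithin] with u hu
    exact div_nonneg (conj_nonneg hp1 hp2 hδ (le_of_lt hu)) (le_of_lt hu)
  · filter_upwards [self_mem_nhdsWithin] with u hu
    rw [div_le_iff₀ hu]
    exact conj_le hp1 hp2 hδ (le_of_lt hu)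

lemma gi_tendsto_atTop (hp1 : 1 < p) (hp2 : p ≤ 2) (hδ : 0 ≤ δ) :
    Tendsto (gi p δ) atTop atTop := by
  apply tendsto_atTop_atTop.2
  intro M
  refine ⟨fd p δ (max M 0), fun y hy => ?_⟩
  have hM0 : 0 ≤ max M 0 := le_max_right M 0
  have hfd0 : 0 ≤ fd p δ (max M 0) := fd_nonneg hδ hM0
  have h := gi_mono hp1 hp2 hδ hfd0 hy
  rw [gi_fd_eq hp1 hp2 hδ hM0] at h
  exact le_trans (le_max_left M 0) h

lemma conj_tendsto_atTop (hp1 : 1 < p) (hp2 : p ≤ 2) (hδ : 0 ≤ δ) :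
    Tendsto (fun t => conj (omg p δ) t / t) atTop atTop := by
  have h1 : Tendsto (fun t : ℝ => gi p δ (t / 2)) atTop atTop :=
    (gi_tendsto_atTop hp1 hp2 hδ).comp (Tendsto.atTop_div_const (by norm_num) tendsto_id)
  have h2 : Tendsto (fun t : ℝ => gi p δ (t / 2) / 2) atTop atTop :=
    Tendsto.atTop_div_const (by norm_num) h1
  apply tendsto_atTop_mono' atTop ?_ h2
  filter_upwards [eventually_gt_atTop (0:ℝ)] with t ht
  have h3 := conj_ge hp1 hp2 hδ ht
  rw [div_le_div_iff₀ (by norm_num) ht]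
  nlinarith

lemma gi_continuousOn (hp1 : 1 < p) (hp2 : p ≤ 2) (hδ : 0 ≤ δ) :
    ContinuousOn (gi p δ) (Set.Ici 0) := by
  intro t ht
  rcases eq_or_lt_of_le (Set.mem_Ici.1 ht) with h | h
  · rw [← h]
    have key : Tendsto (gi p δ) (nhdsWithin 0 (Set.Ici 0)) (nhds (gi p δ 0)) := by
      rw [gi_zero hp1 hp2 hδ]
      exact gi_tendsto_zero hp1 hp2 hδ
    exact key
  · exact (gi_continuousAt hp1 hp2 hδ h).continuousWithinAt

lemma regular_conj (hp1 : 1 < p) (hp2 : p ≤ 2) (hδ : 0 ≤ δ) :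
    IsRegularNFunction (conj (omg p δ)) where
  continuousOn := conj_continuousOn hp1 hp2 hδ
  convexOn := conj_convexOn hp1 hp2 hδ
  pos := fun t ht => conj_pos hp1 hp2 hδ ht
  tendsto_zero := conj_tendsto_zero hp1 hp2 hδ
  tendsto_atTop := conj_tendsto_atTop hp1 hp2 hδ
  diffAt := fun t ht => (hasDerivAt_conj hp1 hp2 hδ ht).differentiableAt
  deriv_continuousOn :=
    (gi_continuousOn hp1 hp2 hδ).congr fun t ht => deriv_conj_eq hp1 hp2 hδ (Set.mem_Ici.1 ht)
  diffAt2 := fun t ht => (hasDerivAt_deriv_conj hp1 hp2 hδ ht).differentiableAt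
  deriv2_continuousOn := by
    apply ContinuousOn.congr (f := fun t => (f2 p δ (gi p δ t))⁻¹)
    · intro t ht
      have ht' := Set.mem_Ioi.1 ht
      have hg0 : 0 < gi p δ t := gi_pos hp1 hp2 hδ ht'
      exact (((f2_continuousAt hδ hg0).comp (gi_continuousAt hp1 hp2 hδ ht')).inv₀
        (f2_pos hp1 hδ hg0).ne').continuousWithinAt
    · intro t ht
      exact deriv2_conj hp1 hp2 hδ (Set.mem_Ioi.1 ht)
  deriv2_pos := fun t ht => by
    rw [deriv2_conj hp1 hp2 hδ ht]
    exact inv_pos.2 (f2_pos hp1 hδ (gi_pos hp1 hp2 hδ ht))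

lemma conj_lower (hp1 : 1 < p) (hp2 : p ≤ 2) (hδ : 0 ≤ δ) {t : ℝ} (ht : 0 < t) :
    1 * deriv (conj (omg p δ)) t ≤ t * deriv (deriv (conj (omg p δ))) t := by
  rw [one_mul, deriv_conj hp1 hp2 hδ ht, deriv2_conj hp1 hp2 hδ ht]
  have hs0 : 0 < gi p δ t := gi_pos hp1 hp2 hδ ht
  have hf2 : 0 < f2 p δ (gi p δ t) := f2_pos hp1 hδ hs0
  have hkey : gi p δ t * f2 p δ (gi p δ t) ≤ t := by
    have h := key_upper hp1 hp2 hδ hs0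
    rwa [fd_gi_eq hp1 hp2 hδ ht.le] at h
  rw [← div_eq_mul_inv, le_div_iff₀ hf2]
  exact hkey

lemma conj_upper (hp1 : 1 < p) (hp2 : p ≤ 2) (hδ : 0 ≤ δ) {t : ℝ} (ht : 0 < t) :
    t * deriv (deriv (conj (omg p δ))) t ≤ (p - 1)⁻¹ * deriv (conj (omg p δ)) t := by
  rw [deriv_conj hp1 hp2 hδ ht, deriv2_conj hp1 hp2 hδ ht]
  have hs0 : 0 < gi p δ t := gi_pos hp1 hp2 hδ ht
  have hf2 : 0 < f2 p δ (gi p δ t) := f2_pos hp1 hδ hs0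
  have hp0 : 0 < p - 1 := by linarith
  have hkey : (p - 1) * t ≤ gi p δ t * f2 p δ (gi p δ t) := by
    have h := key_lower hp1 hp2 hδ hs0
    rwa [fd_gi_eq hp1 hp2 hδ ht.le] at h
  rw [← div_eq_mul_inv, show (p - 1)⁻¹ * gi p δ t = gi p δ t / (p - 1) by ring,
    div_le_div_iff₀ hf2 hp0]
  nlinarith

lemma delta2_conj (hp1 : 1 < p) (hp2 : p ≤ 2) (hδ : 0 ≤ δ) :
    SatisfiesDelta2 (conj (omg p δ)) (4 * (4:ℝ) ^ (p - 1)⁻¹) := by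
  have hp0 : 0 < p - 1 := by linarith
  have hl1 : (1:ℝ) ≤ (4:ℝ) ^ (p - 1)⁻¹ := by
    calc (1:ℝ) = (4:ℝ) ^ (0:ℝ) := (Real.rpow_zero 4).symm
    _ ≤ (4:ℝ) ^ (p - 1)⁻¹ :=
      Real.rpow_le_rpow_of_exponent_le (by norm_num) (by positivity)
  refine ⟨by linarith, fun t ht => ?_⟩
  rcases eq_or_lt_of_le ht with h | h
  · rw [← h]
    simp [conj_zero]
  · set lam := (4:ℝ) ^ (p - 1)⁻¹ with hlam
    have ht2 : (0:ℝ) < t / 2 := by linarith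
    set s := gi p δ (t / 2) with hs
    have hs0 : 0 < s := gi_pos hp1 hp2 hδ ht2
    have hfds : fd p δ s = t / 2 := fd_gi_eq hp1 hp2 hδ ht2.le
    have hkey : (4:ℝ) * fd p δ s ≤ fd p δ (lam * s) := by
      have h1 : δ + lam * s ≤ lam * (δ + s) := by nlinarith
      have h2 : (lam * (δ + s)) ^ (p - 2) ≤ (δ + lam * s) ^ (p - 2) :=
        Real.rpow_le_rpow_of_nonpos (by nlinarith) h1 (by linarith)
      have h3 : (lam * (δ + s)) ^ (p - 2) = lam ^ (p - 2) * (δ + s) ^ (p - 2) :=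
        Real.mul_rpow (by linarith) (by linarith)
      have h4 : lam ^ (p - 2) * lam = lam ^ (p - 1) := by
        rw [show p - 1 = p - 2 + 1 by ring, Real.rpow_add_one (by linarith : lam ≠ 0)]
      have h5 : lam ^ (p - 1) = 4 := by
        rw [hlam, ← Real.rpow_mul (by norm_num : (0:ℝ) ≤ 4), inv_mul_cancel₀ hp0.ne',
          Real.rpow_one]
      have h6 : lam ^ (p - 2) * (δ + s) ^ (p - 2) * (lam * s)
          = (lam ^ (p - 2) * lam) * ((δ + s) ^ (p - 2) * s) := by ring
      simp only [fd]
      calc (4:ℝ) * ((δ + s) ^ (p - 2) * s)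
          = lam ^ (p - 2) * (δ + s) ^ (p - 2) * (lam * s) := by rw [h6, h4, h5]
        _ ≤ (δ + lam * s) ^ (p - 2) * (lam * s) := by
            rw [← h3]
            exact mul_le_mul_of_nonneg_right h2 (mul_nonneg (by linarith) hs0.le)
    have h2t : 2 * t ≤ fd p δ (lam * s) := by
      rw [hfds] at hkey; linarith
    have hls0 : 0 ≤ lam * s := mul_nonneg (by linarith) hs0.le
    have hgi2t : gi p δ (2 * t) ≤ lam * s := by
      have h7 := gi_mono hp1 hp2 hδ (by linarith : (0:ℝ) ≤ 2 * t) h2t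
      rwa [gi_fd_eq hp1 hp2 hδ hls0] at h7
    have hC1 : conj (omg p δ) (2 * t) ≤ gi p δ (2 * t) * (2 * t) :=
      conj_le hp1 hp2 hδ (by linarith)
    have hC2 : s * (t / 2) ≤ conj (omg p δ) t := by
      have h8 := conj_ge hp1 hp2 hδ h
      linarith [h8]
    calc conj (omg p δ) (2 * t) ≤ gi p δ (2 * t) * (2 * t) := hC1
      _ ≤ (lam * s) * (2 * t) := mul_le_mul_of_nonneg_right hgi2t (by linarith)
      _ = (4 * lam) * (s * (t / 2)) := by ring
      _ ≤ (4 * lam) * conj (omg p δ) t :=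
          mul_le_mul_of_nonneg_left hC2 (by nlinarith)

end Stmt0Aux

open Stmt0Aux in
/-- For `p ∈ (1,2]` and `δ ∈ [0,∞)`, `ω = ω_{p,δ}` satisfies
`ω(t) ≤ ω'(t)·t ≤ 2^{p+1} ω(t)` for `t ≥ 0` and `(p−1) ω'(t) ≤ ω''(t)·t ≤ ω'(t)` for
`t > 0`; `ω` is balanced with characteristics `(p−1, 1)`, `ω*` is balanced with
characteristics `(1, (p−1)⁻¹)`, and both satisfy the Δ₂-condition with constants
depending only on `p`. -/
theorem stmt0 (p : ℝ) (hp : p ∈ Set.Ioc (1:ℝ) 2) :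
    ∃ K Kstar : ℝ,
      ∀ δ : ℝ, 0 ≤ δ →
        (∀ t : ℝ, 0 ≤ t →
          omg p δ t ≤ deriv (omg p δ) t * t ∧
          deriv (omg p δ) t * t ≤ (2:ℝ) ^ (p + 1) * omg p δ t) ∧
        (∀ t : ℝ, 0 < t →
          (p - 1) * deriv (omg p δ) t ≤ deriv (deriv (omg p δ)) t * t ∧
          deriv (deriv (omg p δ)) t * t ≤ deriv (omg p δ) t) ∧
        IsBalanced (omg p δ) (p - 1) 1 ∧
        SatisfiesDelta2 (omg p δ) K ∧
        IsBalanced (conj (omg p δ)) 1 (p - 1)⁻¹ ∧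
        SatisfiesDelta2 (conj (omg p δ)) Kstar := by
  obtain ⟨hp1, hp2⟩ := hp
  refine ⟨16, 4 * (4:ℝ) ^ (p - 1)⁻¹, fun δ hδ => ?_⟩
  have h4le : (4:ℝ) ≤ 2 ^ (p + 1) := by
    calc (4:ℝ) = 2 ^ (2:ℝ) := by
          rw [show (2:ℝ) = ((2:ℕ):ℝ) by norm_num]
          rw [Real.rpow_natCast]; norm_num
    _ ≤ 2 ^ (p + 1) := Real.rpow_le_rpow_of_exponent_le one_le_two (by linarith)
  refine ⟨fun t ht => ?_, fun t ht => ?_, ?_, ?_, ?_, ?_⟩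
  · rw [deriv_omg hp1 hp2 hδ ht]
    constructor
    · exact omg_le_fd_mul hp1 hp2 hδ ht
    · have h1 := fd_mul_le hp1 hp2 hδ ht
      have h2 := omg_nonneg hp1 hδ ht
      nlinarith
  · rw [deriv_omg hp1 hp2 hδ ht.le, deriv2_omg hp1 hp2 hδ ht]
    constructor
    · rw [mul_comm (f2 p δ t) t]
      exact key_lower hp1 hp2 hδ ht
    · rw [mul_comm (f2 p δ t) t]
      exact key_upper hp1 hp2 hδ ht
  · exact
      { regular := regular_omg hp1 hp2 hδ
        gamma1_mem := ⟨by linarith, by linarith⟩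
        gamma2_ge := le_refl 1
        lower := fun t ht => by
          rw [deriv_omg hp1 hp2 hδ ht.le, deriv2_omg hp1 hp2 hδ ht]
          exact key_lower hp1 hp2 hδ ht
        upper := fun t ht => by
          rw [deriv_omg hp1 hp2 hδ ht.le, deriv2_omg hp1 hp2 hδ ht, one_mul]
          exact key_upper hp1 hp2 hδ ht }
  · exact delta2_omg hp1 hp2 hδ
  · exact
      { regular := regular_conj hp1 hp2 hδ
        gamma1_mem := ⟨one_pos, le_refl 1⟩
        gamma2_ge := (one_le_inv₀ (by linarith)).2 (by linarith)
        lower := fun t ht => conj_lower hp1 hp2 hδ ht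
        upper := fun t ht => conj_upper hp1 hp2 hδ ht }
  · exact delta2_conj hp1 hp2 hδ

end
end

section
/- Let p ∈ (1,2], δ ∈ [0,∞) and A ≥ 1, and set ω := ω_{p,δ}. Then the A-approximation ω^A is a balanced N-function with characteristics (p−1, 1), i.e. (p−1)·(ω^A)'(t) ≤ t·(ω^A)''(t) ≤ (ω^A)'(t) for all t > 0. -/
open Real Set MeasureTheory Filter Matrix

noncomputable section

section AuxOmega

variable {p δ A : ℝ}

/-- The integrand `f(s) = (δ+s)^(p-2) * s`. -/
private noncomputable def ff (p δ : ℝ) (s : ℝ) : ℝ := (δ + s) ^ (p - 2) * s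

/-- The derivative of the integrand. -/
private noncomputable def gg (p δ : ℝ) (s : ℝ) : ℝ :=
  (p - 2) * (δ + s) ^ (p - 3) * s + (δ + s) ^ (p - 2)

private lemma ff_contAt (hp1 : 1 < p) (hδ : 0 ≤ δ) {s : ℝ} (hs : 0 ≤ s) :
    ContinuousAt (ff p δ) s := by
  rcases lt_or_eq_of_le (by positivity : (0:ℝ) ≤ δ + s) with h | h
  · exact (((Real.continuousAt_rpow_const _ _ (Or.inl h.ne')).comp
      ((continuous_const.add continuous_id).continuousAt)).mul continuousAt_id)
  · -- δ + s = 0, so δ = 0 and s = 0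
    have hδ0 : δ = 0 := by nlinarith
    have hs0 : s = 0 := by nlinarith
    subst hδ0; subst hs0
    have hval : ff p 0 0 = 0 := by simp [ff]
    have hb : ∀ x : ℝ, ‖ff p 0 x‖ ≤ |x| ^ (p - 1) := by
      intro x
      rcases eq_or_ne x 0 with hx | hx
      · simp [ff, hx, Real.zero_rpow (by linarith : p - 1 ≠ 0)]
      · have hax : (0:ℝ) < |x| := abs_pos.mpr hx
        have : ‖ff p 0 x‖ = |(0 + x) ^ (p-2)| * |x| := by
          simp [ff, abs_mul]
        rw [this]
        have h1 : |(0 + x) ^ (p-2)| ≤ |x| ^ (p-2) := by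
          simpa using Real.abs_rpow_le_abs_rpow x (p-2)
        calc |(0 + x) ^ (p-2)| * |x| ≤ |x| ^ (p-2) * |x| :=
              mul_le_mul_of_nonneg_right h1 (abs_nonneg x)
          _ = |x| ^ (p - 1) := by
              rw [show p - 1 = (p-2) + 1 by ring, Real.rpow_add hax, Real.rpow_one]
    have htend : Tendsto (fun x : ℝ => |x| ^ (p - 1)) (nhds 0) (nhds 0) := by
      have hc : ContinuousAt (fun x : ℝ => |x| ^ (p - 1)) 0 :=
        (Real.continuousAt_rpow_const _ _ (Or.inr (by linarith))).comp
          continuous_abs.continuousAt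
      simpa [abs_zero, Real.zero_rpow (show p - 1 ≠ 0 by linarith)] using hc.tendsto
    have := squeeze_zero_norm hb htend
    unfold ContinuousAt
    rw [hval]
    exact this

private lemma ff_measurable (p δ : ℝ) : Measurable (ff p δ) := by
  unfold ff; fun_prop

private lemma omg_hasDeriv (hp1 : 1 < p) (hδ : 0 ≤ δ) {t : ℝ} (ht : 0 ≤ t) :
    HasDerivAt (omg p δ) (ff p δ t) t := by
  have hint : IntervalIntegrable (ff p δ) volume 0 t := by
    apply ContinuousOn.intervalIntegrable
    intro s hs
    have hs0 : 0 ≤ s := by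
      rcases hs with ⟨h1, _⟩
      simpa [min_eq_left ht] using h1
    exact (ff_contAt hp1 hδ hs0).continuousWithinAt
  exact intervalIntegral.integral_hasDerivAt_right hint
    ((ff_measurable p δ).aestronglyMeasurable.stronglyMeasurableAtFilter)
    (ff_contAt hp1 hδ ht)

private lemma ff_hasDeriv (hp1 : 1 < p) (hδ : 0 ≤ δ) {t : ℝ} (ht : 0 < t) :
    HasDerivAt (ff p δ) (gg p δ t) t := by
  have hu : (0:ℝ) < δ + t := by linarith
  have h1 : HasDerivAt (fun s : ℝ => (δ + s) ^ (p - 2)) (1 * (p-2) * (δ+t) ^ (p-2-1)) t :=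
    HasDerivAt.rpow_const ((hasDerivAt_id t).const_add δ) (Or.inl hu.ne')
  have h2 := h1.mul (hasDerivAt_id t)
  have : gg p δ t = 1 * (p-2) * (δ+t) ^ (p-2-1) * t + (δ + t) ^ (p-2) * 1 := by
    rw [show p - 2 - 1 = p - 3 by ring]; unfold gg; ring
  rw [this]
  exact h2

private lemma gg_eq {t : ℝ} (hδt : 0 < δ + t) :
    gg p δ t = (δ + t) ^ (p - 3) * (δ + (p-1) * t) := by
  unfold gg
  rw [show p - 2 = (p - 3) + 1 by ring, Real.rpow_add hδt, Real.rpow_one]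
  ring

private lemma ff_eq {t : ℝ} (hδt : 0 < δ + t) :
    ff p δ t = (δ + t) ^ (p - 3) * ((δ + t) * t) := by
  unfold ff
  rw [show p - 2 = (p - 3) + 1 by ring, Real.rpow_add hδt, Real.rpow_one]
  ring

private lemma ff_pos (hp1 : 1 < p) (hδ : 0 ≤ δ) {t : ℝ} (ht : 0 < t) : 0 < ff p δ t := by
  have : (0:ℝ) < δ + t := by linarith
  exact mul_pos (Real.rpow_pos_of_pos this _) ht

private lemma gg_pos (hp1 : 1 < p) (hδ : 0 ≤ δ) {t : ℝ} (ht : 0 < t) : 0 < gg p δ t := by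
  have h : (0:ℝ) < δ + t := by linarith
  rw [gg_eq h]
  have : 0 < δ + (p-1) * t := by nlinarith
  exact mul_pos (Real.rpow_pos_of_pos h _) this

private lemma ineq_low (hp1 : 1 < p) (hp2 : p ≤ 2) (hδ : 0 ≤ δ) {t : ℝ} (ht : 0 < t) :
    (p - 1) * ff p δ t ≤ t * gg p δ t := by
  have h : (0:ℝ) < δ + t := by linarith
  rw [ff_eq h, gg_eq h]
  have hv : (0:ℝ) ≤ (δ + t) ^ (p - 3) := (Real.rpow_pos_of_pos h _).le
  have key : (p - 1) * ((δ + t) * t) ≤ t * (δ + (p-1) * t) := by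
    nlinarith [mul_nonneg (mul_nonneg hδ ht.le) (by linarith : (0:ℝ) ≤ 2 - p)]
  calc (p-1) * ((δ + t) ^ (p-3) * ((δ + t) * t))
      = (δ + t) ^ (p-3) * ((p-1) * ((δ + t) * t)) := by ring
    _ ≤ (δ + t) ^ (p-3) * (t * (δ + (p-1) * t)) := mul_le_mul_of_nonneg_left key hv
    _ = t * ((δ + t) ^ (p-3) * (δ + (p-1) * t)) := by ring

private lemma ineq_up (hp1 : 1 < p) (hp2 : p ≤ 2) (hδ : 0 ≤ δ) {t : ℝ} (ht : 0 < t) :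
    t * gg p δ t ≤ ff p δ t := by
  have h : (0:ℝ) < δ + t := by linarith
  rw [ff_eq h, gg_eq h]
  have hv : (0:ℝ) ≤ (δ + t) ^ (p - 3) := (Real.rpow_pos_of_pos h _).le
  have key : t * (δ + (p-1) * t) ≤ (δ + t) * t := by
    nlinarith [mul_nonneg (mul_nonneg ht.le ht.le) (by linarith : (0:ℝ) ≤ 2 - p)]
  calc t * ((δ + t) ^ (p-3) * (δ + (p-1) * t))
      = (δ + t) ^ (p-3) * (t * (δ + (p-1) * t)) := by ring
    _ ≤ (δ + t) ^ (p-3) * ((δ + t) * t) := mul_le_mul_of_nonneg_left key hv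
    _ = (δ + t) ^ (p-3) * ((δ + t) * t) := rfl


private lemma gg_contAt (hp1 : 1 < p) (hδ : 0 ≤ δ) {s : ℝ} (hs : 0 < s) :
    ContinuousAt (gg p δ) s := by
  have hb : (0:ℝ) < δ + s := by linarith
  have c1 : ContinuousAt (fun x : ℝ => (δ + x) ^ (p - 3)) s :=
    (Real.continuousAt_rpow_const _ _ (Or.inl hb.ne')).comp
      ((continuous_const.add continuous_id).continuousAt)
  have c2 : ContinuousAt (fun x : ℝ => (δ + x) ^ (p - 2)) s :=
    (Real.continuousAt_rpow_const _ _ (Or.inl hb.ne')).comp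
      ((continuous_const.add continuous_id).continuousAt)
  exact (((continuousAt_const.mul c1).mul continuousAt_id).add c2)

end AuxOmega

/-- For `p ∈ (1,2]`, `δ ∈ [0,∞)` and `A ≥ 1`, the `A`-approximation
`ω^A` of `ω = ω_{p,δ}` is a balanced N-function with characteristics `(p−1, 1)`,
i.e. `(p−1)(ω^A)'(t) ≤ t (ω^A)''(t) ≤ (ω^A)'(t)` for all `t > 0`. -/
theorem stmt1 (p δ A : ℝ) (hp : p ∈ Set.Ioc (1:ℝ) 2) (hδ : 0 ≤ δ) (hA : 1 ≤ A) :
    IsBalanced (approxA (omg p δ) A) (p - 1) 1 ∧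
    ∀ t : ℝ, 0 < t →
      (p - 1) * deriv (approxA (omg p δ) A) t ≤ t * deriv (deriv (approxA (omg p δ) A)) t ∧
      t * deriv (deriv (approxA (omg p δ) A)) t ≤ deriv (approxA (omg p δ) A) t := by
  obtain ⟨hp1, hp2⟩ := hp
  have hA0 : (0:ℝ) < A := by linarith
  set F := approxA (omg p δ) A with hFdef
  have hωd : ∀ t : ℝ, 0 ≤ t → deriv (omg p δ) t = ff p δ t :=
    fun t ht => (omg_hasDeriv hp1 hδ ht).deriv
  have hω2A : deriv (deriv (omg p δ)) A = gg p δ A := by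
    have hev : deriv (omg p δ) =ᶠ[nhds A] ff p δ := by
      filter_upwards [Ioi_mem_nhds hA0] with x hx
      exact hωd x (le_of_lt hx)
    rw [hev.deriv_eq]
    exact (ff_hasDeriv hp1 hδ hA0).deriv
  set Q : ℝ → ℝ := fun t => omg p δ A + ff p δ A * (t - A) + gg p δ A / 2 * ((t - A) * (t - A))
    with hQdef
  have hQeq : Set.EqOn F Q (Set.Ici A) := by
    intro t ht
    rcases eq_or_lt_of_le (Set.mem_Ici.mp ht) with h | h
    · rw [← h]
      simp only [hFdef, hQdef, approxA, if_pos le_rfl]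
      ring
    · have hnot : ¬ t ≤ A := not_le.mpr h
      simp only [hFdef, approxA, if_neg hnot, hQdef]
      rw [hωd A hA0.le, hω2A]
      ring
  have hQd : ∀ t : ℝ, HasDerivAt Q (ff p δ A + gg p δ A * (t - A)) t := by
    intro t
    have h1 : HasDerivAt (fun x : ℝ => x - A) 1 t := (hasDerivAt_id t).sub_const A
    have hq := ((h1.const_mul (ff p δ A)).const_add (omg p δ A)).add
      ((h1.mul h1).const_mul (gg p δ A / 2))
    have : ff p δ A + gg p δ A * (t - A)
        = ff p δ A * 1 + gg p δ A / 2 * (1 * (t - A) + (t - A) * 1) := by ring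
    rw [hQdef, this]
    exact hq
  set D : ℝ → ℝ := fun t => if t ≤ A then ff p δ t else ff p δ A + gg p δ A * (t - A)
    with hDdef
  have hDle : ∀ t : ℝ, t ≤ A → D t = ff p δ t := fun t ht => if_pos ht
  have hDgt : ∀ t : ℝ, A < t → D t = ff p δ A + gg p δ A * (t - A) :=
    fun t ht => if_neg (not_le.mpr ht)
  have hFd : ∀ t : ℝ, 0 ≤ t → HasDerivAt F (D t) t := by
    intro t ht
    rcases lt_trichotomy t A with h | h | h
    · rw [hDle t h.le]
      refine (omg_hasDeriv hp1 hδ ht).congr_of_eventuallyEq ?_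
      filter_upwards [Iio_mem_nhds h] with x hx
      have hxle : x ≤ A := le_of_lt hx
      simp only [hFdef, approxA, if_pos hxle]
    · subst h
      rw [hDle t le_rfl]
      have hL : HasDerivWithinAt F (ff p δ t) (Set.Iic t) t := by
        refine ((omg_hasDeriv hp1 hδ ht).hasDerivWithinAt).congr ?_ ?_
        · intro x hx
          have hxle : x ≤ t := hx
          simp only [hFdef, approxA, if_pos hxle]
        · simp only [hFdef, approxA, if_pos le_rfl]
      have hR : HasDerivWithinAt F (ff p δ t) (Set.Ici t) t := by
        have h0 := hQd t
        rw [sub_self, mul_zero, add_zero] at h0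
        exact h0.hasDerivWithinAt.congr (fun x hx => hQeq hx) (hQeq Set.self_mem_Ici)
      have hU := hL.union hR
      rwa [Set.Iic_union_Ici, hasDerivWithinAt_univ] at hU
    · rw [hDgt t h]
      refine (hQd t).congr_of_eventuallyEq ?_
      filter_upwards [Ioi_mem_nhds h] with x hx
      exact hQeq (Set.mem_Ici.mpr (le_of_lt hx))
  have hFd_eq : ∀ t : ℝ, 0 ≤ t → deriv F t = D t := fun t ht => (hFd t ht).deriv
  have hDd : ∀ t : ℝ, 0 < t → HasDerivAt D (gg p δ (min t A)) t := by
    intro t ht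
    rcases lt_trichotomy t A with h | h | h
    · rw [min_eq_left h.le]
      refine (ff_hasDeriv hp1 hδ ht).congr_of_eventuallyEq ?_
      filter_upwards [Iio_mem_nhds h] with x hx
      exact hDle x (le_of_lt hx)
    · subst h
      rw [min_self]
      have hL : HasDerivWithinAt D (gg p δ t) (Set.Iic t) t :=
        ((ff_hasDeriv hp1 hδ ht).hasDerivWithinAt).congr
          (fun x hx => hDle x hx) (hDle t le_rfl)
      have hR : HasDerivWithinAt D (gg p δ t) (Set.Ici t) t := by
        have haff : HasDerivAt (fun x : ℝ => ff p δ t + gg p δ t * (x - t)) (gg p δ t) t := by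
          have h1 : HasDerivAt (fun x : ℝ => x - t) 1 t := (hasDerivAt_id t).sub_const t
          simpa using (h1.const_mul (gg p δ t)).const_add (ff p δ t)
        refine haff.hasDerivWithinAt.congr ?_ ?_
        · intro x hx
          have hxge : t ≤ x := hx
          rcases eq_or_lt_of_le hxge with h' | h'
          · rw [← h', hDle t le_rfl]
            simp
          · rw [hDgt x h']
        · rw [hDle t le_rfl]
          simp
      have hU := hL.union hR
      rwa [Set.Iic_union_Ici, hasDerivWithinAt_univ] at hU
    · rw [min_eq_right h.le]
      have haff : HasDerivAt (fun x : ℝ => ff p δ A + gg p δ A * (x - A)) (gg p δ A) t := by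
        have h1 : HasDerivAt (fun x : ℝ => x - A) 1 t := (hasDerivAt_id t).sub_const A
        simpa using (h1.const_mul (gg p δ A)).const_add (ff p δ A)
      refine haff.congr_of_eventuallyEq ?_
      filter_upwards [Ioi_mem_nhds h] with x hx
      exact hDgt x hx
  have hFdd : ∀ t : ℝ, 0 < t → HasDerivAt (deriv F) (gg p δ (min t A)) t := by
    intro t ht
    refine (hDd t ht).congr_of_eventuallyEq ?_
    filter_upwards [Ioi_mem_nhds ht] with x hx
    exact hFd_eq x (le_of_lt hx)
  have hFdd_eq : ∀ t : ℝ, 0 < t → deriv (deriv F) t = gg p δ (min t A) :=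
    fun t ht => (hFdd t ht).deriv
  have hDpos : ∀ t : ℝ, 0 < t → 0 < D t := by
    intro t ht
    rcases le_or_gt t A with h | h
    · rw [hDle t h]
      exact ff_pos hp1 hδ ht
    · rw [hDgt t h]
      have h1 := ff_pos hp1 hδ hA0
      have h2 := gg_pos hp1 hδ hA0
      nlinarith
  have hDcont : ContinuousOn D (Set.Ici 0) := by
    intro t ht
    rcases eq_or_lt_of_le (Set.mem_Ici.mp ht) with h | h
    · have hct : ContinuousAt D t := by
        refine (ff_contAt hp1 hδ h.le).congr ?_
        filter_upwards [Iio_mem_nhds (show t < A by linarith)] with x hx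
        exact (hDle x (le_of_lt hx)).symm
      exact hct.continuousWithinAt
    · exact ((hDd t h).differentiableAt.continuousAt).continuousWithinAt
  have hFcont : ContinuousOn F (Set.Ici 0) :=
    fun t ht => ((hFd t ht).differentiableAt.continuousAt).continuousWithinAt
  have hFmono : StrictMonoOn F (Set.Ici 0) := by
    apply strictMonoOn_of_deriv_pos (convex_Ici 0) hFcont
    intro x hx
    rw [interior_Ici] at hx
    rw [hFd_eq x hx.le]
    exact hDpos x hx
  have hF0 : F 0 = 0 := by
    have h1 : F 0 = omg p δ 0 := by simp only [hFdef, approxA, if_pos hA0.le]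
    rw [h1]
    simp [omg]
  have hFpos : ∀ t : ℝ, 0 < t → 0 < F t := by
    intro t ht
    have := hFmono (Set.self_mem_Ici) (Set.mem_Ici.mpr ht.le) ht
    rwa [hF0] at this
  have hDmono : StrictMonoOn D (Set.Ici 0) := by
    apply strictMonoOn_of_deriv_pos (convex_Ici 0) hDcont
    intro x hx
    rw [interior_Ici] at hx
    rw [(hDd x hx).deriv]
    exact gg_pos hp1 hδ (lt_min hx hA0)
  have hconv : ConvexOn ℝ (Set.Ici 0) F := by
    refine MonotoneOn.convexOn_of_deriv (convex_Ici 0) hFcont ?_ ?_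
    · intro x hx
      rw [interior_Ici] at hx
      exact (hFd x hx.le).differentiableAt.differentiableWithinAt
    · intro a ha b hb hab
      rw [interior_Ici] at ha hb
      rw [hFd_eq a ha.le, hFd_eq b hb.le]
      exact hDmono.monotoneOn (Set.mem_Ici.mpr ha.le) (Set.mem_Ici.mpr hb.le) hab
  have htz : Tendsto (fun t => F t / t) (nhdsWithin 0 (Set.Ioi 0)) (nhds 0) := by
    have h0 : HasDerivAt (omg p δ) 0 0 := by
      have := omg_hasDeriv hp1 hδ (le_refl (0:ℝ))
      simpa [ff] using this
    have hs := hasDerivAt_iff_tendsto_slope.mp h0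
    have hs' : Tendsto (slope (omg p δ) 0) (nhdsWithin 0 (Set.Ioi 0)) (nhds 0) :=
      hs.mono_left (nhdsWithin_mono _ (fun x hx => ne_of_gt hx))
    refine Filter.Tendsto.congr' ?_ hs'
    filter_upwards [self_mem_nhdsWithin,
      mem_nhdsWithin_of_mem_nhds (Iio_mem_nhds hA0)] with x hx1 hx2
    have hω0 : omg p δ 0 = 0 := by simp [omg]
    have hx3 : F x = omg p δ x := by
      have hxle : x ≤ A := le_of_lt hx2
      simp only [hFdef, approxA, if_pos hxle]
    simp [slope, hω0, hx3, vsub_eq_sub, div_eq_inv_mul]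
  have hta : Tendsto (fun t => F t / t) atTop atTop := by
    have hg2 := gg_pos hp1 hδ hA0
    have e1 : Tendsto (fun t : ℝ => gg p δ A / 2 * t + (ff p δ A - gg p δ A * A)) atTop atTop :=
      tendsto_atTop_add_const_right _ _ (Tendsto.const_mul_atTop (by linarith) tendsto_id)
    have e2 : Tendsto
        (fun t : ℝ => (omg p δ A - ff p δ A * A + gg p δ A / 2 * (A * A)) / t) atTop (nhds 0) :=
      Tendsto.div_atTop tendsto_const_nhds tendsto_id
    have e3 := e1.atTop_add e2
    refine Filter.Tendsto.congr' ?_ e3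
    filter_upwards [eventually_gt_atTop A, eventually_gt_atTop 0] with t h1 h2
    have hQ : F t = Q t := hQeq h1.le
    rw [hQ, hQdef]
    field_simp
    ring
  have h2cont : ContinuousOn (deriv (deriv F)) (Set.Ioi 0) := by
    have hc : ContinuousOn (fun t => gg p δ (min t A)) (Set.Ioi 0) := by
      intro t ht
      have hmin : 0 < min t A := lt_min ht hA0
      have hmc : ContinuousAt (fun x : ℝ => min x A) t :=
        (continuous_id.min continuous_const).continuousAt
      exact (ContinuousAt.comp (x := t) (g := gg p δ) (f := fun x : ℝ => min x A)
        (gg_contAt hp1 hδ hmin) hmc).continuousWithinAt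
    exact ContinuousOn.congr hc (fun t ht => hFdd_eq t ht)
  have hdc : ContinuousOn (deriv F) (Set.Ici 0) := by
    intro t ht
    exact (hDcont t ht).congr (fun y hy => hFd_eq y hy) (hFd_eq t ht)
  have hlow : ∀ t : ℝ, 0 < t → (p - 1) * deriv F t ≤ t * deriv (deriv F) t := by
    intro t ht
    rw [hFd_eq t ht.le, hFdd_eq t ht]
    rcases le_or_gt t A with h | h
    · rw [hDle t h, min_eq_left h]
      exact ineq_low hp1 hp2 hδ ht
    · rw [hDgt t h, min_eq_right h.le]
      have k1 := ineq_low hp1 hp2 hδ hA0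
      have hg2 := gg_pos hp1 hδ hA0
      nlinarith [mul_nonneg (mul_nonneg (by linarith : (0:ℝ) ≤ 2 - p) hg2.le)
        (by linarith : (0:ℝ) ≤ t - A)]
  have hup : ∀ t : ℝ, 0 < t → t * deriv (deriv F) t ≤ deriv F t := by
    intro t ht
    rw [hFd_eq t ht.le, hFdd_eq t ht]
    rcases le_or_gt t A with h | h
    · rw [hDle t h, min_eq_left h]
      exact ineq_up hp1 hp2 hδ ht
    · rw [hDgt t h, min_eq_right h.le]
      have k2 := ineq_up hp1 hp2 hδ hA0
      nlinarith [gg_pos hp1 hδ hA0]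
  refine ⟨⟨⟨hFcont, hconv, hFpos, htz, hta,
      fun t ht => (hFd t ht.le).differentiableAt, hdc,
      fun t ht => (hFdd t ht).differentiableAt, h2cont,
      fun t ht => by rw [hFdd_eq t ht]; exact gg_pos hp1 hδ (lt_min ht hA0)⟩,
      ⟨by linarith, by linarith⟩, le_refl 1, hlow,
      fun t ht => by rw [one_mul]; exact hup t ht⟩,
    fun t ht => ⟨hlow t ht, hup t ht⟩⟩

end
end

section
/- Let φ be a balanced N-function with characteristics (γ₁,γ₂). Then for every A ≥ 1 the A-approximation φ^A is also a balanced N-function with the same characteristics (γ₁,γ₂), i.e. γ₁·(φ^A)'(t) ≤ t·(φ^A)''(t) ≤ γ₂·(φ^A)'(t) for all t > 0. -/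
open Real Set MeasureTheory Filter Matrix

noncomputable section

namespace Stmt2Aux

/-- The quadratic piece of the `A`-approximation. -/
def qA (φ : ℝ → ℝ) (A : ℝ) (t : ℝ) : ℝ :=
  (1/2) * deriv (deriv φ) A * t ^ 2 + (deriv φ A - deriv (deriv φ) A * A) * t
    + (φ A - deriv φ A * A + (1/2) * deriv (deriv φ) A * A ^ 2)

lemma approxA_eq_left (φ : ℝ → ℝ) (A : ℝ) {t : ℝ} (ht : t ≤ A) :
    approxA φ A t = φ t := by
  rw [approxA, if_pos ht]

lemma approxA_eq_right (φ : ℝ → ℝ) (A : ℝ) {t : ℝ} (ht : A ≤ t) :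
    approxA φ A t = qA φ A t := by
  rcases eq_or_lt_of_le ht with h | h
  · subst h
    rw [approxA, if_pos le_rfl, qA]; ring
  · rw [approxA, if_neg (not_le.mpr h), qA]

lemma hasDerivAt_qA (φ : ℝ → ℝ) (A : ℝ) (t : ℝ) :
    HasDerivAt (qA φ A)
      (deriv (deriv φ) A * t + (deriv φ A - deriv (deriv φ) A * A)) t := by
  have H := (((hasDerivAt_pow 2 t).const_mul ((1/2 : ℝ) * deriv (deriv φ) A)).add
      ((hasDerivAt_id t).const_mul (deriv φ A - deriv (deriv φ) A * A))).add_const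
      (φ A - deriv φ A * A + (1/2) * deriv (deriv φ) A * A ^ 2)
  exact H.congr_deriv (by push_cast; ring)

lemma hasDerivAt_approxA (φ : ℝ → ℝ) (A : ℝ) (hreg : IsRegularNFunction φ)
    (hA : 1 ≤ A) {t : ℝ} (ht : 0 < t) :
    HasDerivAt (approxA φ A)
      (if t ≤ A then deriv φ t
       else deriv (deriv φ) A * t + (deriv φ A - deriv (deriv φ) A * A)) t := by
  rcases lt_trichotomy t A with hlt | heq | hgt
  · rw [if_pos hlt.le]
    refine ((hreg.diffAt t ht).hasDerivAt).congr_of_eventuallyEq ?_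
    filter_upwards [Iio_mem_nhds hlt] with y hy
    exact approxA_eq_left φ A hy.le
  · subst heq
    rw [if_pos le_rfl]
    have h1 : HasDerivWithinAt (approxA φ t) (deriv φ t) (Iic t) t :=
      ((hreg.diffAt t ht).hasDerivAt.hasDerivWithinAt).congr
        (fun y hy => approxA_eq_left φ t hy) (approxA_eq_left φ t le_rfl)
    have h2 : HasDerivWithinAt (approxA φ t) (deriv φ t) (Ici t) t := by
      have hq := (hasDerivAt_qA φ t t).hasDerivWithinAt (s := Ici t)
      rw [show deriv (deriv φ) t * t + (deriv φ t - deriv (deriv φ) t * t) = deriv φ t by ring]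
        at hq
      exact hq.congr (fun y hy => approxA_eq_right φ t hy) (approxA_eq_right φ t le_rfl)
    have := h1.union h2
    rw [Iic_union_Ici] at this
    exact hasDerivWithinAt_univ.mp this
  · rw [if_neg (not_le.mpr hgt)]
    refine (hasDerivAt_qA φ A t).congr_of_eventuallyEq ?_
    filter_upwards [Ioi_mem_nhds hgt] with y hy
    exact approxA_eq_right φ A (le_of_lt hy)

lemma deriv_approxA_lt (φ : ℝ → ℝ) (A : ℝ) {t : ℝ} (ht : t < A) :
    deriv (approxA φ A) t = deriv φ t := by
  apply Filter.EventuallyEq.deriv_eq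
  filter_upwards [Iio_mem_nhds ht] with y hy
  exact approxA_eq_left φ A hy.le

lemma deriv_approxA_eq (φ : ℝ → ℝ) (A : ℝ) (hreg : IsRegularNFunction φ) (hA : 1 ≤ A) :
    deriv (approxA φ A) = fun t =>
      if t ≤ A then deriv φ t
      else deriv (deriv φ) A * t + (deriv φ A - deriv (deriv φ) A * A) := by
  funext t
  rcases lt_or_ge t A with hlt | hle
  · rw [deriv_approxA_lt φ A hlt, if_pos hlt.le]
  · have ht : 0 < t := lt_of_lt_of_le (lt_of_lt_of_le one_pos hA) hle
    exact (hasDerivAt_approxA φ A hreg hA ht).deriv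

lemma hasDerivAt_deriv_approxA (φ : ℝ → ℝ) (A : ℝ) (hreg : IsRegularNFunction φ)
    (hA : 1 ≤ A) {t : ℝ} (ht : 0 < t) :
    HasDerivAt (deriv (approxA φ A))
      (if t ≤ A then deriv (deriv φ) t else deriv (deriv φ) A) t := by
  rw [deriv_approxA_eq φ A hreg hA]
  set c := deriv (deriv φ) A with hc
  set b := deriv φ A with hb
  have hlin : ∀ s : ℝ, HasDerivAt (fun y : ℝ => c * y + (b - c * A)) c s := by
    intro s
    simpa using ((hasDerivAt_id s).const_mul c).add_const (b - c * A)
  rcases lt_trichotomy t A with hlt | heq | hgt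
  · rw [if_pos hlt.le]
    refine ((hreg.diffAt2 t ht).hasDerivAt).congr_of_eventuallyEq ?_
    filter_upwards [Iio_mem_nhds hlt] with y hy
    exact if_pos hy.le
  · subst heq
    rw [if_pos le_rfl]
    have h1 : HasDerivWithinAt
        (fun y => if y ≤ t then deriv φ y else c * y + (b - c * t)) (deriv (deriv φ) t)
        (Iic t) t :=
      ((hreg.diffAt2 t ht).hasDerivAt.hasDerivWithinAt).congr
        (fun y hy => if_pos hy) (if_pos le_rfl)
    have h2 : HasDerivWithinAt
        (fun y => if y ≤ t then deriv φ y else c * y + (b - c * t)) (deriv (deriv φ) t)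
        (Ici t) t := by
      refine ((hlin t).hasDerivWithinAt).congr (fun y hy => ?_) ?_
      · rcases eq_or_lt_of_le (Set.mem_Ici.mp hy) with h | h
        · subst h; rw [if_pos le_rfl]; simp [hb, hc]
        · rw [if_neg (not_le.mpr h)]
      · rw [if_pos le_rfl]; simp [hb, hc]
    have := h1.union h2
    rw [Iic_union_Ici] at this
    exact hasDerivWithinAt_univ.mp this
  · rw [if_neg (not_le.mpr hgt)]
    refine (hlin t).congr_of_eventuallyEq ?_
    filter_upwards [Ioi_mem_nhds hgt] with y hy
    exact if_neg (not_le.mpr hy)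

end Stmt2Aux

open Stmt2Aux in
/-- If `φ` is a balanced N-function with characteristics `(γ₁,γ₂)`,
then for every `A ≥ 1` the `A`-approximation `φ^A` is a balanced N-function with the
same characteristics, i.e. `γ₁ (φ^A)'(t) ≤ t (φ^A)''(t) ≤ γ₂ (φ^A)'(t)` for `t > 0`. -/
theorem stmt2 (φ : ℝ → ℝ) (γ₁ γ₂ : ℝ) (h : IsBalanced φ γ₁ γ₂) (A : ℝ) (hA : 1 ≤ A) :
    IsBalanced (approxA φ A) γ₁ γ₂ ∧
    ∀ t : ℝ, 0 < t →
      γ₁ * deriv (approxA φ A) t ≤ t * deriv (deriv (approxA φ A)) t ∧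
      t * deriv (deriv (approxA φ A)) t ≤ γ₂ * deriv (approxA φ A) t := by
  have hreg := h.regular
  have hA0 : (0:ℝ) < A := lt_of_lt_of_le one_pos hA
  set c := deriv (deriv φ) A with hcdef
  set b := deriv φ A with hbdef
  have hc : 0 < c := hreg.deriv2_pos A hA0
  have hupA : A * c ≤ γ₂ * b := h.upper A hA0
  have hloA : γ₁ * b ≤ A * c := h.lower A hA0
  have hγ2 : 1 ≤ γ₂ := h.gamma2_ge
  have hγ1 : 0 < γ₁ := h.gamma1_mem.1
  have hγ1' : γ₁ ≤ 1 := h.gamma1_mem.2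
  have hb : 0 < b := by nlinarith
  -- monotonicity of deriv φ
  have hmono : StrictMonoOn (deriv φ) (Ici 0) := by
    apply strictMonoOn_of_deriv_pos (convex_Ici 0) hreg.deriv_continuousOn
    intro x hx
    rw [interior_Ici] at hx
    exact hreg.deriv2_pos x hx
  -- key inequalities
  have key : ∀ t : ℝ, 0 < t →
      γ₁ * deriv (approxA φ A) t ≤ t * deriv (deriv (approxA φ A)) t ∧
      t * deriv (deriv (approxA φ A)) t ≤ γ₂ * deriv (approxA φ A) t := by
    intro t ht
    rw [(hasDerivAt_deriv_approxA φ A hreg hA ht).deriv,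
      (hasDerivAt_approxA φ A hreg hA ht).deriv]
    by_cases hle : t ≤ A
    · simp only [if_pos hle]
      exact ⟨h.lower t ht, h.upper t ht⟩
    · simp only [if_neg hle]
      push_neg at hle
      constructor
      · nlinarith [mul_nonneg (mul_nonneg (by linarith : (0:ℝ) ≤ 1 - γ₁) hc.le)
          (by linarith : (0:ℝ) ≤ t - A)]
      · nlinarith [mul_nonneg (mul_nonneg (by linarith : (0:ℝ) ≤ γ₂ - 1) hc.le)
          (by linarith : (0:ℝ) ≤ t - A)]
  refine ⟨⟨?_, h.gamma1_mem, h.gamma2_ge, fun t ht => (key t ht).1, fun t ht => (key t ht).2⟩,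
    key⟩
  refine ⟨?_, ?_, ?_, ?_, ?_, ?_, ?_, ?_, ?_, ?_⟩
  -- continuousOn
  · intro t ht
    rcases eq_or_lt_of_le (Set.mem_Ici.mp ht) with h0 | h0
    · refine (hreg.continuousOn t ht).congr_of_eventuallyEq ?_ ?_
      · filter_upwards [mem_nhdsWithin_of_mem_nhds (Iio_mem_nhds (h0 ▸ hA0))] with y hy
        exact approxA_eq_left φ A hy.le
      · exact approxA_eq_left φ A (by linarith)
    · exact (hasDerivAt_approxA φ A hreg hA h0).differentiableAt.continuousAt.continuousWithinAt
  -- convexOn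
  · have hdiff : DifferentiableOn ℝ (approxA φ A) (interior (Ici (0:ℝ))) := by
      rw [interior_Ici]
      exact fun x hx =>
        (hasDerivAt_approxA φ A hreg hA hx).differentiableAt.differentiableWithinAt
    have hmono2 : MonotoneOn (deriv (approxA φ A)) (interior (Ici (0:ℝ))) := by
      rw [interior_Ici]
      intro x hx y hy hxy
      rw [deriv_approxA_eq φ A hreg hA]
      simp only
      by_cases hxA : x ≤ A
      · rw [if_pos hxA]
        by_cases hyA : y ≤ A
        · rw [if_pos hyA]
          exact hmono.monotoneOn (Set.mem_Ici.mpr (le_of_lt (Set.mem_Ioi.mp hx))) (Set.mem_Ici.mpr (le_of_lt (Set.mem_Ioi.mp hy))) hxy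
        · rw [if_neg hyA]
          push_neg at hyA
          have h1 : deriv φ x ≤ b :=
            hmono.monotoneOn (Set.mem_Ici.mpr (le_of_lt (Set.mem_Ioi.mp hx))) (Set.mem_Ici.mpr hA0.le) hxA
          nlinarith
      · rw [if_neg hxA]
        push_neg at hxA
        have hyA : ¬ y ≤ A := not_le.mpr (lt_of_lt_of_le hxA hxy)
        rw [if_neg hyA]
        nlinarith
    have hcont : ContinuousOn (approxA φ A) (Ici (0:ℝ)) := by
      intro t ht
      rcases eq_or_lt_of_le (Set.mem_Ici.mp ht) with h0 | h0
      · refine (hreg.continuousOn t ht).congr_of_eventuallyEq ?_ ?_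
        · filter_upwards [mem_nhdsWithin_of_mem_nhds (Iio_mem_nhds (h0 ▸ hA0))] with y hy
          exact approxA_eq_left φ A hy.le
        · exact approxA_eq_left φ A (by linarith)
      · exact (hasDerivAt_approxA φ A hreg hA h0).differentiableAt.continuousAt.continuousWithinAt
    exact hmono2.convexOn_of_deriv (convex_Ici 0) hcont hdiff
  -- pos
  · intro t ht
    by_cases hle : t ≤ A
    · rw [approxA_eq_left φ A hle]
      exact hreg.pos t ht
    · push_neg at hle
      rw [approxA_eq_right φ A hle.le, qA]
      have hφA : 0 < φ A := hreg.pos A hA0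
      nlinarith [sq_nonneg (t - A), mul_pos hb (by linarith : (0:ℝ) < t - A)]
  -- tendsto_zero
  · refine Filter.Tendsto.congr' ?_ hreg.tendsto_zero
    filter_upwards [mem_nhdsWithin_of_mem_nhds (Iio_mem_nhds hA0)] with t ht
    rw [approxA_eq_left φ A ht.le]
  -- tendsto_atTop
  · set K := φ A - b * A + (1/2) * c * A ^ 2 with hK
    set M := |b - c * A| + |K| with hM
    clear_value K M
    apply tendsto_atTop_mono' atTop (f₁ := fun t => c / 2 * t - M)
    · filter_upwards [eventually_ge_atTop (A + 1)] with t htA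
      have ht1 : (1:ℝ) ≤ t := by linarith
      have htA' : A < t := by linarith
      rw [approxA_eq_right φ A htA'.le, qA]
      rw [le_div_iff₀ (by linarith : (0:ℝ) < t)]
      rw [← hcdef, ← hbdef, ← hK, hM]
      have h1 : 0 ≤ (b - c * A + |b - c * A|) * t :=
        mul_nonneg (by nlinarith [neg_abs_le (b - c * A)]) (by linarith)
      have h2 : |K| * 1 ≤ |K| * t := by nlinarith [abs_nonneg K]
      have ht2 : t * t = t ^ 2 := by ring
      nlinarith [neg_abs_le K, h1, h2, ht2]
    · have := tendsto_atTop_add_const_right atTop (-M)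
        (Filter.Tendsto.const_mul_atTop (by linarith : (0:ℝ) < c / 2) tendsto_id)
      simpa [sub_eq_add_neg] using this
  -- diffAt
  · exact fun t ht => (hasDerivAt_approxA φ A hreg hA ht).differentiableAt
  -- deriv_continuousOn
  · intro t ht
    rcases eq_or_lt_of_le (Set.mem_Ici.mp ht) with h0 | h0
    · refine (hreg.deriv_continuousOn t ht).congr_of_eventuallyEq ?_ ?_
      · filter_upwards [mem_nhdsWithin_of_mem_nhds (Iio_mem_nhds (h0 ▸ hA0))] with y hy
        exact deriv_approxA_lt φ A hy
      · exact deriv_approxA_lt φ A (by linarith)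
    · exact
        (hasDerivAt_deriv_approxA φ A hreg hA h0).differentiableAt.continuousAt.continuousWithinAt
  -- diffAt2
  · exact fun t ht => (hasDerivAt_deriv_approxA φ A hreg hA ht).differentiableAt
  -- deriv2_continuousOn
  · have hfor : ∀ t : ℝ, 0 < t → deriv (deriv (approxA φ A)) t =
        (if t ≤ A then deriv (deriv φ) t else c) :=
      fun t ht => (hasDerivAt_deriv_approxA φ A hreg hA ht).deriv
    have hg2 : ContinuousOn (fun t : ℝ => if t ≤ A then deriv (deriv φ) t else c) (Ioi 0) := by
      intro t ht
      rcases lt_trichotomy t A with hlt | heq | hgt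
      · refine (hreg.deriv2_continuousOn t ht).congr_of_eventuallyEq ?_ (if_pos hlt.le)
        filter_upwards [mem_nhdsWithin_of_mem_nhds (Iio_mem_nhds hlt)] with y hy
        exact if_pos hy.le
      · subst heq
        have h1 : ContinuousWithinAt (fun y : ℝ => if y ≤ t then deriv (deriv φ) y else c)
            (Ioi 0 ∩ Iic t) t := by
          refine ((hreg.deriv2_continuousOn t hA0).mono inter_subset_left).congr
            (fun y hy => if_pos hy.2) (if_pos le_rfl)
        have h2 : ContinuousWithinAt (fun y : ℝ => if y ≤ t then deriv (deriv φ) y else c)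
            (Ici t) t := by
          refine (continuousWithinAt_const (b := c)).congr (fun y hy => ?_) ?_
          · rcases eq_or_lt_of_le (Set.mem_Ici.mp hy) with h' | h'
            · subst h'; rw [if_pos le_rfl]
            · rw [if_neg (not_le.mpr h')]
          · rw [if_pos le_rfl]
        refine (h1.union h2).mono ?_
        intro y hy
        by_cases hyA : y ≤ t
        · exact Or.inl ⟨hy, hyA⟩
        · exact Or.inr (le_of_lt (not_le.mp hyA))
      · refine (continuousWithinAt_const (b := c)).congr_of_eventuallyEq ?_
          (if_neg (not_le.mpr hgt))
        filter_upwards [mem_nhdsWithin_of_mem_nhds (Ioi_mem_nhds hgt)] with y hy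
        exact if_neg (not_le.mpr hy)
    exact hg2.congr fun t ht => hfor t ht
  -- deriv2_pos
  · intro t ht
    rw [(hasDerivAt_deriv_approxA φ A hreg hA ht).deriv]
    by_cases hle : t ≤ A
    · rw [if_pos hle]; exact hreg.deriv2_pos t ht
    · rw [if_neg hle]; exact hc

end
end

section
/- Let p ∈ (1,2], δ ∈ [0,∞) and A ≥ 1, and set ω := ω_{p,δ}. Then for all λ ≥ 0 and all t ≥ 0 one has ω(λt) ≤ max{λ, λ²}·ω(t) and ω^A(λt) ≤ max{λ, λ²}·ω^A(t). -/
open Real Set MeasureTheory Filter Matrix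

noncomputable section

namespace Stmt3Aux

/-- The integrand of `omg`. -/
def fI (p δ : ℝ) (s : ℝ) : ℝ := (δ + s) ^ (p - 2) * s

variable {p δ A : ℝ}

lemma fI_nonneg (hδ : 0 ≤ δ) {s : ℝ} (hs : 0 ≤ s) : 0 ≤ fI p δ s :=
  mul_nonneg (Real.rpow_nonneg (by linarith) _) hs

lemma fI_zero : fI p δ 0 = 0 := mul_zero _

lemma fI_continuousAt (hx : 0 < δ + x) : ContinuousAt (fI p δ) x := by
  have h1 : ContinuousAt (fun y : ℝ => y ^ (p - 2)) (δ + x) :=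
    Real.continuousAt_rpow_const _ _ (Or.inl hx.ne')
  exact (h1.comp ((continuous_const.add continuous_id).continuousAt)).mul continuousAt_id

lemma fI_continuousOn (hp1 : 1 < p) (hδ : 0 ≤ δ) : ContinuousOn (fI p δ) (Ici 0) := by
  intro x hx
  rcases lt_or_eq_of_le (by linarith [mem_Ici.mp hx] : (0:ℝ) ≤ δ + x) with h | h
  · exact (fI_continuousAt h).continuousWithinAt
  · have hδ0 : δ = 0 := by have := mem_Ici.mp hx; linarith
    have hx0 : x = 0 := by have := mem_Ici.mp hx; linarith
    subst hδ0; subst hx0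
    have hcw : ContinuousWithinAt (fun s : ℝ => s ^ (p - 1)) (Ici 0) 0 :=
      (Real.continuousAt_rpow_const 0 (p - 1) (Or.inr (by linarith))).continuousWithinAt
    refine hcw.congr (fun s hs => ?_) ?_
    · rcases eq_or_lt_of_le (mem_Ici.mp hs) with h0 | h0
      · simp [fI, ← h0, Real.zero_rpow (by linarith : p - 1 ≠ 0)]
      · simp only [fI, zero_add]
        rw [show p - 1 = (p - 2) + 1 by ring, Real.rpow_add_one h0.ne']
    · simp [fI, Real.zero_rpow (by linarith : p - 1 ≠ 0)]

lemma hasDerivAt_fI (hx : 0 < δ + x) :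
    HasDerivAt (fI p δ) ((δ + x) ^ (p - 3) * (δ + (p - 1) * x)) x := by
  have hb : HasDerivAt (fun s : ℝ => δ + s) 1 x := (hasDerivAt_id x).const_add δ
  have h1 : HasDerivAt (fun s : ℝ => (δ + s) ^ (p - 2)) (1 * (p - 2) * (δ + x) ^ (p - 2 - 1)) x :=
    hb.rpow_const (Or.inl hx.ne')
  have h2 := h1.mul (hasDerivAt_id x)
  have e1 : (δ + x) ^ (p - 2) = (δ + x) ^ (p - 3) * (δ + x) := by
    rw [show p - 2 = (p - 3) + 1 by ring, Real.rpow_add_one hx.ne']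
  have e2 : (δ + x) ^ (p - 2 - 1) = (δ + x) ^ (p - 3) := by
    rw [show p - 2 - 1 = p - 3 by ring]
  refine h2.congr_deriv ?_
  rw [e2, e1]; simp only [id_eq]; ring

lemma fI_strictMono (hp1 : 1 < p) (hδ : 0 ≤ δ) : StrictMonoOn (fI p δ) (Ici 0) := by
  apply strictMonoOn_of_deriv_pos (convex_Ici 0) (fI_continuousOn hp1 hδ)
  intro x hx
  rw [interior_Ici, mem_Ioi] at hx
  have hpos : 0 < δ + x := by linarith
  rw [(hasDerivAt_fI hpos).deriv]
  have h1 : 0 < (δ + x) ^ (p - 3) := Real.rpow_pos_of_pos hpos _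
  have h2 : 0 < δ + (p - 1) * x := by nlinarith
  positivity

lemma fI_mono (hp1 : 1 < p) (hδ : 0 ≤ δ) : MonotoneOn (fI p δ) (Ici 0) :=
  (fI_strictMono hp1 hδ).monotoneOn

lemma fI_scale (hp2 : p ≤ 2) (hδ : 0 ≤ δ) {lam s : ℝ} (hlam : 1 ≤ lam) (hs : 0 ≤ s) :
    fI p δ (lam * s) ≤ lam * fI p δ s := by
  rcases eq_or_lt_of_le hs with h | h
  · simp [fI, ← h]
  · unfold fI
    have h1 : (δ + lam * s) ^ (p - 2) ≤ (δ + s) ^ (p - 2) :=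
      Real.rpow_le_rpow_of_nonpos (by linarith) (by nlinarith) (by linarith)
    calc (δ + lam * s) ^ (p - 2) * (lam * s) ≤ (δ + s) ^ (p - 2) * (lam * s) := by
          apply mul_le_mul_of_nonneg_right h1 (by nlinarith)
      _ = lam * ((δ + s) ^ (p - 2) * s) := by ring

lemma fI_cmp (hp1 : 1 < p) (hp2 : p ≤ 2) (hδ : 0 ≤ δ) {lam s : ℝ}
    (hlam : 0 ≤ lam) (hs : 0 ≤ s) :
    fI p δ (lam * s) ≤ max 1 lam * fI p δ s := by
  rcases le_total lam 1 with h | h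
  · rw [max_eq_left h, one_mul]
    exact fI_mono hp1 hδ (mem_Ici.mpr (mul_nonneg hlam hs)) (mem_Ici.mpr hs) (by nlinarith)
  · rw [max_eq_right h]
    exact fI_scale hp2 hδ h hs

/-- The main abstract integral inequality. -/
lemma intlem {F : ℝ → ℝ} (hF : ContinuousOn F (Ici 0))
    (hpos : ∀ s, 0 ≤ s → 0 ≤ F s)
    {lam t : ℝ} (hlam : 0 ≤ lam) (ht : 0 ≤ t)
    (hcmp : ∀ s, 0 ≤ s → F (lam * s) ≤ max 1 lam * F s) :
    ∫ x in (0:ℝ)..(lam * t), F x ≤ max lam (lam ^ 2) * ∫ x in (0:ℝ)..t, F x := by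
  rcases eq_or_lt_of_le hlam with h0 | h0
  · simp [← h0]
  have hM : max lam (lam ^ 2) = lam * max 1 lam := by
    rw [mul_max_of_nonneg _ _ hlam, mul_one, sq]
  have hint1 : IntervalIntegrable (fun x => lam * F (lam * x)) volume 0 t := by
    apply ContinuousOn.intervalIntegrable
    rw [uIcc_of_le ht]
    apply ContinuousOn.mul continuousOn_const
    apply hF.comp (continuous_const.mul continuous_id).continuousOn
    intro x hx
    exact mem_Ici.mpr (mul_nonneg hlam hx.1)
  have hint2 : IntervalIntegrable (fun x => lam * (max 1 lam * F x)) volume 0 t := by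
    apply ContinuousOn.intervalIntegrable
    rw [uIcc_of_le ht]
    exact continuousOn_const.mul (continuousOn_const.mul
      (hF.mono (fun x hx => mem_Ici.mpr hx.1)))
  have key : (∫ x in (0:ℝ)..(lam * t), F x) = ∫ x in (0:ℝ)..t, lam * F (lam * x) := by
    rw [intervalIntegral.integral_const_mul]
    rw [intervalIntegral.integral_comp_mul_left F h0.ne']
    rw [mul_zero, smul_eq_mul]
    field_simp
  rw [key, hM]
  calc (∫ x in (0:ℝ)..t, lam * F (lam * x))
      ≤ ∫ x in (0:ℝ)..t, lam * (max 1 lam * F x) := by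
        apply intervalIntegral.integral_mono_on ht hint1 hint2
        intro x hx
        exact mul_le_mul_of_nonneg_left (hcmp x hx.1) hlam
    _ = lam * max 1 lam * ∫ x in (0:ℝ)..t, F x := by
        rw [intervalIntegral.integral_const_mul]
        rw [intervalIntegral.integral_const_mul]
        ring


lemma intervalIntegrable_fI (hp1 : 1 < p) (hδ : 0 ≤ δ) {x : ℝ} (hx : 0 ≤ x) :
    IntervalIntegrable (fI p δ) volume 0 x :=
  ((fI_continuousOn hp1 hδ).mono (by rw [uIcc_of_le hx]; exact fun y hy => hy.1)).intervalIntegrable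

lemma hasDerivAt_omg (hp1 : 1 < p) (hδ : 0 ≤ δ) {x : ℝ} (hx : 0 < x) :
    HasDerivAt (omg p δ) (fI p δ x) x := by
  have hco : ContinuousOn (fI p δ) (Ioi 0) := fun y hy =>
    (fI_continuousAt (by have := mem_Ioi.mp hy; linarith)).continuousWithinAt
  exact intervalIntegral.integral_hasDerivAt_right
    (intervalIntegrable_fI hp1 hδ hx.le)
    (hco.stronglyMeasurableAtFilter isOpen_Ioi x hx)
    (fI_continuousAt (by linarith))

lemma hasDerivAt_omg_zero (hp1 : 1 < p) (hp2 : p ≤ 2) (hδ : 0 ≤ δ) :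
    HasDerivAt (omg p δ) 0 0 := by
  rcases eq_or_lt_of_le hδ with h0 | h0
  · -- δ = 0 : estimate directly
    have hδ0 : δ = 0 := h0.symm
    subst hδ0
    rw [hasDerivAt_iff_isLittleO, Asymptotics.isLittleO_iff]
    intro c hc
    have htend : Tendsto (fun x : ℝ => |x| ^ (p - 1)) (nhds 0) (nhds 0) := by
      have h1 : ContinuousAt (fun y : ℝ => y ^ (p - 1)) 0 :=
        Real.continuousAt_rpow_const 0 (p - 1) (Or.inr (by linarith))
      have h2 : ContinuousAt (fun x : ℝ => |x| ^ (p - 1)) 0 :=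
        ContinuousAt.comp (g := fun y : ℝ => y ^ (p - 1)) (by simpa using h1)
          continuous_abs.continuousAt
      have h3 := h2.tendsto
      simpa [Real.zero_rpow (by linarith : p - 1 ≠ 0)] using h3
    filter_upwards [htend.eventually (gt_mem_nhds hc)] with x hx
    have hb : ‖omg p 0 x‖ ≤ |x| ^ (p - 1) * |x - 0| := by
      apply intervalIntegral.norm_integral_le_of_norm_le_const
      intro s hs
      have hsx : |s| ≤ |x| := by
        rcases Set.mem_uIoc.mp hs with ⟨h1, h2⟩ | ⟨h1, h2⟩
        · rw [abs_of_pos h1, abs_of_pos (lt_of_lt_of_le h1 h2)]; exact h2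
        · rw [abs_of_nonpos h2, abs_of_neg (lt_of_lt_of_le h1 h2)]
          linarith
      rcases eq_or_ne s 0 with h | h
      · simp [h]
        positivity
      · have h3 : ‖(0 + s) ^ (p - 2) * s‖ ≤ |s| ^ (p - 2) * |s| := by
          rw [norm_mul, zero_add, Real.norm_eq_abs, Real.norm_eq_abs]
          exact mul_le_mul_of_nonneg_right (Real.abs_rpow_le_abs_rpow _ _) (abs_nonneg _)
        have h4 : |s| ^ (p - 2) * |s| = |s| ^ (p - 1) := by
          rw [show p - 1 = (p - 2) + 1 by ring, Real.rpow_add_one (abs_ne_zero.mpr h)]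
        have h5 : |s| ^ (p - 1) ≤ |x| ^ (p - 1) :=
          Real.rpow_le_rpow (abs_nonneg _) hsx (by linarith)
        calc ‖(0 + s) ^ (p - 2) * s‖ ≤ |s| ^ (p - 1) := by rw [← h4]; exact h3
          _ ≤ |x| ^ (p - 1) := h5
    have homg0 : omg p 0 0 = 0 := intervalIntegral.integral_same
    simp only [homg0, sub_zero, smul_zero, Real.norm_eq_abs]
    calc ‖omg p 0 x‖ ≤ |x| ^ (p - 1) * |x - 0| := hb
      _ ≤ c * |x| := by rw [sub_zero]; exact mul_le_mul_of_nonneg_right hx.le (abs_nonneg _)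
  · -- δ > 0 : FTC
    have hco : ContinuousOn (fI p δ) (Ioi (-δ)) := fun y hy =>
      (fI_continuousAt (by have := mem_Ioi.mp hy; linarith)).continuousWithinAt
    have h := intervalIntegral.integral_hasDerivAt_right
      (intervalIntegrable_fI hp1 hδ le_rfl)
      (hco.stronglyMeasurableAtFilter isOpen_Ioi 0 (mem_Ioi.mpr (by linarith)))
      (fI_continuousAt (by linarith : (0:ℝ) < δ + 0))
    rw [fI_zero] at h; exact h


/-- Second derivative of `omg` at `A`. -/
def c2v (p δ A : ℝ) : ℝ := (δ + A) ^ (p - 3) * (δ + (p - 1) * A)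

/-- The derivative of the `A`-approximation of `omg`. -/
def gA (p δ A : ℝ) (x : ℝ) : ℝ := fI p δ (min x A) + c2v p δ A * (x - min x A)

lemma c2v_nonneg (hp1 : 1 < p) (hδ : 0 ≤ δ) (hA : 1 ≤ A) : 0 ≤ c2v p δ A := by
  have h1 : (0:ℝ) ≤ (δ + A) ^ (p - 3) := Real.rpow_nonneg (by linarith) _
  have h2 : (0:ℝ) ≤ δ + (p - 1) * A := by nlinarith
  exact mul_nonneg h1 h2

lemma key_c (hp1 : 1 < p) (hp2 : p ≤ 2) (hδ : 0 ≤ δ) (hA : 1 ≤ A) :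
    A * c2v p δ A ≤ fI p δ A := by
  unfold c2v fI
  have e1 : (δ + A) ^ (p - 2) = (δ + A) ^ (p - 3) * (δ + A) := by
    rw [show p - 2 = (p - 3) + 1 by ring, Real.rpow_add_one (by linarith : δ + A ≠ 0)]
  rw [e1]
  have h1 : (0:ℝ) ≤ (δ + A) ^ (p - 3) := Real.rpow_nonneg (by linarith) _
  have h2 : (0:ℝ) ≤ A * A * (2 - p) := by nlinarith
  nlinarith [mul_nonneg h1 h2]

lemma gA_of_le (h : x ≤ A) : gA p δ A x = fI p δ x := by
  unfold gA; rw [min_eq_left h]; ring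

lemma gA_of_ge (h : A ≤ x) : gA p δ A x = fI p δ A + c2v p δ A * (x - A) := by
  unfold gA; rw [min_eq_right h]

lemma gA_continuousOn (hp1 : 1 < p) (hδ : 0 ≤ δ) (hA : 1 ≤ A) :
    ContinuousOn (gA p δ A) (Ici 0) := by
  unfold gA
  apply ContinuousOn.add
  · apply (fI_continuousOn hp1 hδ).comp (continuous_id.min continuous_const).continuousOn
    intro x hx; exact mem_Ici.mpr (le_min hx (by linarith))
  · exact continuousOn_const.mul
      ((continuous_id.sub (continuous_id.min continuous_const)).continuousOn)

lemma gA_nonneg (hp1 : 1 < p) (hδ : 0 ≤ δ) (hA : 1 ≤ A) {x : ℝ} (hx : 0 ≤ x) :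
    0 ≤ gA p δ A x :=
  add_nonneg (fI_nonneg hδ (le_min hx (by linarith)))
    (mul_nonneg (c2v_nonneg hp1 hδ hA) (sub_nonneg.mpr (min_le_left _ _)))

lemma gA_mono (hp1 : 1 < p) (hδ : 0 ≤ δ) (hA : 1 ≤ A) {a b : ℝ}
    (ha : 0 ≤ a) (hab : a ≤ b) : gA p δ A a ≤ gA p δ A b := by
  have hc2 := c2v_nonneg hp1 hδ hA
  rcases le_total b A with hbA | hbA
  · rw [gA_of_le (le_trans hab hbA), gA_of_le hbA]
    exact fI_mono hp1 hδ (mem_Ici.mpr ha) (mem_Ici.mpr (le_trans ha hab)) hab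
  · rw [gA_of_ge hbA]
    rcases le_total a A with haA | haA
    · rw [gA_of_le haA]
      have h1 : fI p δ a ≤ fI p δ A :=
        fI_mono hp1 hδ (mem_Ici.mpr ha) (mem_Ici.mpr (by linarith)) haA
      nlinarith
    · rw [gA_of_ge haA]
      nlinarith

lemma gA_cmp (hp1 : 1 < p) (hp2 : p ≤ 2) (hδ : 0 ≤ δ) (hA : 1 ≤ A) {lam s : ℝ}
    (hlam : 0 ≤ lam) (hs : 0 ≤ s) :
    gA p δ A (lam * s) ≤ max 1 lam * gA p δ A s := by
  rcases le_total lam 1 with h1 | h1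
  · rw [max_eq_left h1, one_mul]
    exact gA_mono hp1 hδ hA (mul_nonneg hlam hs) (by nlinarith)
  · rw [max_eq_right h1]
    rcases le_total (lam * s) A with hlsA | hlsA
    · have hsA : s ≤ A := le_trans (by nlinarith) hlsA
      rw [gA_of_le hlsA, gA_of_le hsA]
      exact fI_scale hp2 hδ h1 hs
    · rw [gA_of_ge hlsA]
      have hAc := key_c hp1 hp2 hδ hA
      rcases le_total s A with hsA | hsA
      · have hs0 : 0 < s := by
          rcases eq_or_lt_of_le hs with h | h
          · exfalso; rw [← h] at hlsA; simp at hlsA; linarith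
          · exact h
        rw [gA_of_le hsA]
        have hrp : (δ + A) ^ (p - 2) ≤ (δ + s) ^ (p - 2) :=
          Real.rpow_le_rpow_of_nonpos (by linarith) (by linarith) (by linarith)
        apply le_of_mul_le_mul_left _ (show (0:ℝ) < A by linarith)
        have hfIA : 0 ≤ fI p δ A := fI_nonneg hδ (by linarith)
        have hA1 : A ≤ lam * s := hlsA
        have hstep1 : A * (fI p δ A + c2v p δ A * (lam * s - A)) ≤ fI p δ A * (lam * s) := by
          nlinarith [mul_le_mul_of_nonneg_right hAc (show (0:ℝ) ≤ lam * s - A by linarith)]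
        have hstep2 : fI p δ A * (lam * s) ≤ A * (lam * fI p δ s) := by
          unfold fI
          nlinarith [mul_le_mul_of_nonneg_right hrp
            (show (0:ℝ) ≤ A * (lam * s) by nlinarith)]
        linarith
      · rw [gA_of_ge hsA]
        have hfIA : 0 ≤ fI p δ A := fI_nonneg hδ (by linarith)
        have hc2 := c2v_nonneg hp1 hδ hA
        nlinarith [mul_nonneg (show (0:ℝ) ≤ lam - 1 by linarith)
          (show (0:ℝ) ≤ fI p δ A - A * c2v p δ A by linarith)]

lemma deriv_omg_A (hp1 : 1 < p) (hδ : 0 ≤ δ) (hA : 1 ≤ A) :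
    deriv (omg p δ) A = fI p δ A :=
  (hasDerivAt_omg hp1 hδ (by linarith : (0:ℝ) < A)).deriv

lemma deriv2_omg_A (hp1 : 1 < p) (hδ : 0 ≤ δ) (hA : 1 ≤ A) :
    deriv (deriv (omg p δ)) A = c2v p δ A := by
  have hfe : deriv (omg p δ) =ᶠ[nhds A] fI p δ := by
    filter_upwards [Ioi_mem_nhds (show (0:ℝ) < A by linarith)] with y hy
    exact (hasDerivAt_omg hp1 hδ hy).deriv
  rw [hfe.deriv_eq]
  exact (hasDerivAt_fI (by linarith : (0:ℝ) < δ + A)).deriv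

lemma approxA_eq (hp1 : 1 < p) (hδ : 0 ≤ δ) (hA : 1 ≤ A) (t : ℝ) :
    approxA (omg p δ) A t = if t ≤ A then omg p δ t
      else omg p δ A + fI p δ A * (t - A) + (1/2) * c2v p δ A * (t - A) ^ 2 := by
  unfold approxA
  split
  · rfl
  · rw [deriv_omg_A hp1 hδ hA, deriv2_omg_A hp1 hδ hA]; ring

lemma hasDerivAt_Q (x : ℝ) :
    HasDerivAt
      (fun t => omg p δ A + fI p δ A * (t - A) + (1/2) * c2v p δ A * (t - A) ^ 2)
      (fI p δ A + c2v p δ A * (x - A)) x := by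
  have h1 : HasDerivAt (fun t : ℝ => t - A) 1 x := (hasDerivAt_id x).sub_const A
  have h2 := (h1.const_mul (fI p δ A)).const_add (omg p δ A)
  have h3 := (h1.pow 2).const_mul ((1/2) * c2v p δ A)
  have h4 := h2.add h3
  refine h4.congr_deriv ?_
  ring

lemma hasDerivAt_psi (hp1 : 1 < p) (hp2 : p ≤ 2) (hδ : 0 ≤ δ) (hA : 1 ≤ A) {x : ℝ}
    (hx : 0 ≤ x) : HasDerivAt (approxA (omg p δ) A) (gA p δ A x) x := by
  rcases lt_trichotomy x A with hxA | hxA | hxA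
  · have hev : approxA (omg p δ) A =ᶠ[nhds x] omg p δ := by
      filter_upwards [Iio_mem_nhds hxA] with y hy
      unfold approxA; rw [if_pos (le_of_lt hy)]
    rw [gA_of_le hxA.le]
    rcases eq_or_lt_of_le hx with h0 | h0
    · have h0' : x = 0 := h0.symm
      subst h0'
      rw [fI_zero]
      exact (hasDerivAt_omg_zero hp1 hp2 hδ).congr_of_eventuallyEq hev
    · exact (hasDerivAt_omg hp1 hδ h0).congr_of_eventuallyEq hev
  · subst hxA
    have hL : HasDerivWithinAt (approxA (omg p δ) x) (fI p δ x) (Iic x) x := by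
      refine ((hasDerivAt_omg hp1 hδ (by linarith : (0:ℝ) < x)).hasDerivWithinAt).congr ?_ ?_
      · intro y hy; unfold approxA; rw [if_pos (mem_Iic.mp hy)]
      · unfold approxA; rw [if_pos le_rfl]
    have hR : HasDerivWithinAt (approxA (omg p δ) x) (fI p δ x) (Ici x) x := by
      have hQ := (hasDerivAt_Q (p := p) (δ := δ) (A := x) x).hasDerivWithinAt
        (s := Ici x)
      have hQ' : HasDerivWithinAt
          (fun t => omg p δ x + fI p δ x * (t - x) + (1/2) * c2v p δ x * (t - x) ^ 2)
          (fI p δ x) (Ici x) x := by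
        simpa using hQ
      refine hQ'.congr ?_ ?_
      · intro y hy
        rw [approxA_eq hp1 hδ hA]
        rcases eq_or_lt_of_le (mem_Ici.mp hy) with h | h
        · rw [← h, if_pos le_rfl]; ring
        · rw [if_neg (not_le.mpr h)]
      · rw [approxA_eq hp1 hδ hA, if_pos le_rfl]; ring
    have hU := hL.union hR
    rw [Iic_union_Ici] at hU
    rw [gA_of_le le_rfl]
    exact hasDerivWithinAt_univ.mp hU
  · have hev : approxA (omg p δ) A =ᶠ[nhds x]
        (fun t => omg p δ A + fI p δ A * (t - A) + (1/2) * c2v p δ A * (t - A) ^ 2) := by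
      filter_upwards [Ioi_mem_nhds hxA] with y hy
      rw [approxA_eq hp1 hδ hA, if_neg (not_le.mpr hy)]
    rw [gA_of_ge hxA.le]
    exact (hasDerivAt_Q x).congr_of_eventuallyEq hev

lemma psi_eq_integral (hp1 : 1 < p) (hp2 : p ≤ 2) (hδ : 0 ≤ δ) (hA : 1 ≤ A) {t : ℝ}
    (ht : 0 ≤ t) : approxA (omg p δ) A t = ∫ x in (0:ℝ)..t, gA p δ A x := by
  have h := intervalIntegral.integral_eq_sub_of_hasDerivAt
    (f := approxA (omg p δ) A) (f' := gA p δ A)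
    (fun x hx => hasDerivAt_psi hp1 hp2 hδ hA (by rw [uIcc_of_le ht] at hx; exact hx.1))
    (((gA_continuousOn hp1 hδ hA).mono
      (by rw [uIcc_of_le ht]; exact fun x hx => hx.1)).intervalIntegrable)
  have h0 : approxA (omg p δ) A 0 = 0 := by
    rw [approxA_eq hp1 hδ hA, if_pos (by linarith : (0:ℝ) ≤ A)]
    exact intervalIntegral.integral_same
  rw [h, h0, sub_zero]

end Stmt3Aux

/-- For `p ∈ (1,2]`, `δ ∈ [0,∞)` and `A ≥ 1`, `ω = ω_{p,δ}` satisfies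
`ω(λt) ≤ max{λ, λ²} ω(t)` and `ω^A(λt) ≤ max{λ, λ²} ω^A(t)` for all `λ, t ≥ 0`. -/
theorem stmt3 (p δ A : ℝ) (hp : p ∈ Set.Ioc (1:ℝ) 2) (hδ : 0 ≤ δ) (hA : 1 ≤ A) :
    ∀ lam t : ℝ, 0 ≤ lam → 0 ≤ t →
      omg p δ (lam * t) ≤ max lam (lam ^ 2) * omg p δ t ∧
      approxA (omg p δ) A (lam * t) ≤ max lam (lam ^ 2) * approxA (omg p δ) A t := by
  obtain ⟨hp1, hp2⟩ := hp
  intro lam t hlam ht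
  constructor
  · exact Stmt3Aux.intlem (Stmt3Aux.fI_continuousOn hp1 hδ)
      (fun s hs => Stmt3Aux.fI_nonneg hδ hs) hlam ht
      (fun s hs => Stmt3Aux.fI_cmp hp1 hp2 hδ hlam hs)
  · rw [Stmt3Aux.psi_eq_integral hp1 hp2 hδ hA (mul_nonneg hlam ht),
        Stmt3Aux.psi_eq_integral hp1 hp2 hδ hA ht]
    exact Stmt3Aux.intlem (Stmt3Aux.gA_continuousOn hp1 hδ hA)
      (fun s hs => Stmt3Aux.gA_nonneg hp1 hδ hA hs) hlam ht
      (fun s hs => Stmt3Aux.gA_cmp hp1 hp2 hδ hA hlam hs)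


end
end

section
/- Let p ∈ (1,2], δ > 0 and A ≥ 1, and set ω := ω_{p,δ}, a(t) := (δ+t)^{p−2} and a^A(t) := (ω^A)'(t)/t for t > 0, with a^A(0) := δ^{p−2}. Then a^A is non-increasing on [0,∞) and, for all t ≥ 0: (p−1)·a(t) ≤ a^A(t) ≤ δ^{p−2} and (p−1)·(δ+A)^{p−2} ≤ a^A(t). -/
open Real Set MeasureTheory Filter Matrix

noncomputable section

/-- `a^A(t) = (ω^A)'(t)/t` for `t > 0`, with `a^A(0) = δ^{p−2}`. -/
def aA (p δ A : ℝ) (t : ℝ) : ℝ :=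
  if t = 0 then δ ^ (p - 2) else deriv (approxA (omg p δ) A) t / t

lemma contAt_aux {p δ : ℝ} (hδ : 0 < δ) :
    ∀ s ∈ Set.Ioi (-δ), ContinuousAt (fun s : ℝ => (δ + s) ^ (p - 2) * s) s := by
  intro s hs
  have h1 : (0:ℝ) < δ + s := by simpa using neg_lt_iff_pos_add'.mp hs
  exact ((Real.continuousAt_rpow_const _ _ (Or.inl h1.ne')).comp
    ((continuous_const.add continuous_id).continuousAt)).mul continuousAt_id

lemma omg_hasDerivAt {p δ : ℝ} (hδ : 0 < δ) {t : ℝ} (ht : 0 ≤ t) :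
    HasDerivAt (omg p δ) ((δ + t) ^ (p - 2) * t) t := by
  have ht' : t ∈ Set.Ioi (-δ) := by simp; linarith
  have hint : IntervalIntegrable (fun s : ℝ => (δ + s) ^ (p - 2) * s) volume 0 t := by
    apply ContinuousOn.intervalIntegrable
    apply ContinuousOn.mono (continuousOn_of_forall_continuousAt (contAt_aux hδ))
    intro x hx
    rcases Set.mem_uIcc.mp hx with ⟨h1, _⟩ | ⟨h1, _⟩ <;> (simp; linarith)
  exact intervalIntegral.integral_hasDerivAt_right hint
    (ContinuousAt.stronglyMeasurableAtFilter isOpen_Ioi (contAt_aux hδ) t ht')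
    (contAt_aux hδ t ht')

lemma omg1_hasDerivAt {p δ : ℝ} (hδ : 0 < δ) {t : ℝ} (ht : 0 ≤ t) :
    HasDerivAt (fun s : ℝ => (δ + s) ^ (p - 2) * s)
      ((p - 2) * (δ + t) ^ (p - 3) * t + (δ + t) ^ (p - 2)) t := by
  have h1 : (0:ℝ) < δ + t := by linarith
  have hr : HasDerivAt (fun s : ℝ => (δ + s) ^ (p - 2)) (1 * (p - 2) * (δ + t) ^ (p - 2 - 1)) t :=
    ((hasDerivAt_id t).const_add δ).rpow_const (Or.inl h1.ne')
  have h3 : p - 2 - 1 = p - 3 := by ring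
  rw [h3] at hr
  have := hr.mul (hasDerivAt_id t)
  refine this.congr_deriv ?_
  simp

lemma deriv_omg {p δ : ℝ} (hδ : 0 < δ) {t : ℝ} (ht : 0 ≤ t) :
    deriv (omg p δ) t = (δ + t) ^ (p - 2) * t := (omg_hasDerivAt hδ ht).deriv

lemma deriv2_omg {p δ A : ℝ} (hδ : 0 < δ) (hA : 0 < A) :
    deriv (deriv (omg p δ)) A = (p - 2) * (δ + A) ^ (p - 3) * A + (δ + A) ^ (p - 2) := by
  have hev : deriv (omg p δ) =ᶠ[nhds A] fun s => (δ + s) ^ (p - 2) * s := by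
    filter_upwards [Ioi_mem_nhds hA] with s hs
    exact deriv_omg hδ (le_of_lt hs)
  rw [hev.deriv_eq]
  exact (omg1_hasDerivAt hδ hA.le).deriv

section
variable {p δ A : ℝ}

/-- the quadratic extension -/
def quadp (p δ A : ℝ) (t : ℝ) : ℝ :=
  (1/2) * deriv (deriv (omg p δ)) A * t ^ 2
    + (deriv (omg p δ) A - deriv (deriv (omg p δ)) A * A) * t
    + (omg p δ A - deriv (omg p δ) A * A + (1/2) * deriv (deriv (omg p δ)) A * A ^ 2)

lemma quadp_hasDerivAt (t : ℝ) :
    HasDerivAt (quadp p δ A)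
      (deriv (deriv (omg p δ)) A * t + (deriv (omg p δ) A - deriv (deriv (omg p δ)) A * A)) t := by
  have h1 : HasDerivAt (fun t : ℝ => (1/2) * deriv (deriv (omg p δ)) A * t ^ 2)
      ((1/2) * deriv (deriv (omg p δ)) A * (2 * t)) t := by
    simpa using ((hasDerivAt_pow 2 t).const_mul ((1/2) * deriv (deriv (omg p δ)) A))
  have h2 := ((h1.add ((hasDerivAt_id t).const_mul
      (deriv (omg p δ) A - deriv (deriv (omg p δ)) A * A))).add_const
      (omg p δ A - deriv (omg p δ) A * A + (1/2) * deriv (deriv (omg p δ)) A * A ^ 2))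
  refine h2.congr_deriv ?_
  ring

lemma deriv_approxA_lt (hδ : 0 < δ) {t : ℝ} (ht : 0 ≤ t) (htA : t < A) :
    deriv (approxA (omg p δ) A) t = (δ + t) ^ (p - 2) * t := by
  have hev : approxA (omg p δ) A =ᶠ[nhds t] omg p δ := by
    filter_upwards [Iio_mem_nhds htA] with s hs
    simp [approxA, le_of_lt (Set.mem_Iio.mp hs)]
  rw [hev.deriv_eq]
  exact deriv_omg hδ ht

lemma deriv_approxA_gt (hδ : 0 < δ) {t : ℝ} (htA : A < t) :
    deriv (approxA (omg p δ) A) t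
      = deriv (deriv (omg p δ)) A * t + (deriv (omg p δ) A - deriv (deriv (omg p δ)) A * A) := by
  have hev : approxA (omg p δ) A =ᶠ[nhds t] quadp p δ A := by
    filter_upwards [Ioi_mem_nhds htA] with s hs
    simp [approxA, quadp, not_le.mpr (Set.mem_Ioi.mp hs)]
  rw [hev.deriv_eq]
  exact (quadp_hasDerivAt t).deriv

lemma deriv_approxA_at (hδ : 0 < δ) (hA : 0 < A) :
    deriv (approxA (omg p δ) A) A = (δ + A) ^ (p - 2) * A := by
  have hdω : HasDerivAt (omg p δ) ((δ + A) ^ (p - 2) * A) A := omg_hasDerivAt hδ hA.le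
  have h1 : HasDerivWithinAt (approxA (omg p δ) A) ((δ + A) ^ (p - 2) * A) (Set.Iic A) A := by
    apply (hdω.hasDerivWithinAt).congr
    · intro s hs; simp [approxA, (Set.mem_Iic.mp hs)]
    · simp [approxA]
  have h2 : HasDerivWithinAt (approxA (omg p δ) A) ((δ + A) ^ (p - 2) * A) (Set.Ici A) A := by
    have hq : HasDerivAt (quadp p δ A) ((δ + A) ^ (p - 2) * A) A := by
      have := quadp_hasDerivAt (p := p) (δ := δ) (A := A) A
      rw [show deriv (deriv (omg p δ)) A * A + (deriv (omg p δ) A - deriv (deriv (omg p δ)) A * A)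
        = deriv (omg p δ) A by ring, deriv_omg hδ hA.le] at this
      exact this
    apply (hq.hasDerivWithinAt).congr
    · intro s hs
      rcases eq_or_lt_of_le (Set.mem_Ici.mp hs) with h | h
      · simp [approxA, ← h, quadp]; ring
      · simp [approxA, quadp, not_le.mpr h]
    · simp [approxA, quadp]; ring
  have := (h1.union h2)
  rw [Iic_union_Ici, hasDerivWithinAt_univ] at this
  exact this.deriv

end

lemma aA_eq {p δ A : ℝ} (hδ : 0 < δ) (hA : 1 ≤ A) {t : ℝ} (ht : 0 ≤ t) :
    aA p δ A t = if t ≤ A then (δ + t) ^ (p - 2)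
      else ((p - 2) * (δ + A) ^ (p - 3) * A + (δ + A) ^ (p - 2))
        + ((2 - p) * (δ + A) ^ (p - 3) * A ^ 2) / t := by
  have hA0 : (0:ℝ) < A := lt_of_lt_of_le one_pos hA
  rcases eq_or_lt_of_le ht with h0 | h0
  · rw [aA, if_pos h0.symm, ← h0, if_pos (by linarith : (0:ℝ) ≤ A), add_zero]
  rw [aA, if_neg (ne_of_gt h0)]
  rcases lt_trichotomy t A with h | h | h
  · rw [if_pos h.le, deriv_approxA_lt hδ ht h, mul_div_cancel_right₀ _ (ne_of_gt h0)]
  · rw [if_pos h.le, h, deriv_approxA_at hδ hA0, mul_div_cancel_right₀ _ (ne_of_gt hA0)]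
  · rw [if_neg (not_le.mpr h), deriv_approxA_gt hδ h, deriv2_omg hδ hA0, deriv_omg hδ hA0.le]
    field_simp
    ring


/-- For `p ∈ (1,2]`, `δ > 0`, `A ≥ 1`, the function `a^A` is
non-increasing on `[0,∞)` and satisfies `(p−1)(δ+t)^{p−2} ≤ a^A(t) ≤ δ^{p−2}` and
`(p−1)(δ+A)^{p−2} ≤ a^A(t)` for all `t ≥ 0`. -/
theorem stmt5 (p δ A : ℝ) (hp : p ∈ Set.Ioc (1:ℝ) 2) (hδ : 0 < δ) (hA : 1 ≤ A) :
    (∀ s t : ℝ, 0 ≤ s → s ≤ t → aA p δ A t ≤ aA p δ A s) ∧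
    ∀ t : ℝ, 0 ≤ t →
      (p - 1) * (δ + t) ^ (p - 2) ≤ aA p δ A t ∧
      aA p δ A t ≤ δ ^ (p - 2) ∧
      (p - 1) * (δ + A) ^ (p - 2) ≤ aA p δ A t := by
  obtain ⟨hp1, hp2⟩ := hp
  have hA0 : (0:ℝ) < A := lt_of_lt_of_le one_pos hA
  have hX : (0:ℝ) < δ + A := by linarith
  have hX3 : (0:ℝ) < (δ + A) ^ (p - 3) := Real.rpow_pos_of_pos hX _
  have hXid : (δ + A) ^ (p - 3) * (δ + A) = (δ + A) ^ (p - 2) := by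
    rw [show p - 2 = (p - 3) + 1 by ring, Real.rpow_add_one (ne_of_gt hX)]
  set b : ℝ := (p - 2) * (δ + A) ^ (p - 3) * A + (δ + A) ^ (p - 2) with hb
  set c : ℝ := (2 - p) * (δ + A) ^ (p - 3) * A ^ 2 with hc
  have hc0 : 0 ≤ c := by
    apply mul_nonneg (mul_nonneg (by linarith) hX3.le) (sq_nonneg A)
  have hbca : b + c / A = (δ + A) ^ (p - 2) := by
    rw [hb, hc, ← hXid]; field_simp; ring
  have hblow : (p - 1) * (δ + A) ^ (p - 2) ≤ b := by
    have key : b - (p - 1) * (δ + A) ^ (p - 2) = (2 - p) * (δ + A) ^ (p - 3) * δ := by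
      rw [hb, ← hXid]; ring
    nlinarith [mul_nonneg (mul_nonneg (by linarith : (0:ℝ) ≤ 2 - p) hX3.le) hδ.le]
  have hmono : ∀ s t : ℝ, 0 ≤ s → s ≤ t → aA p δ A t ≤ aA p δ A s := by
    intro s t hs hst
    have ht : 0 ≤ t := hs.trans hst
    rw [aA_eq hδ hA hs, aA_eq hδ hA ht]
    by_cases hsA : s ≤ A
    · rw [if_pos hsA]
      by_cases htA : t ≤ A
      · rw [if_pos htA]
        exact Real.rpow_le_rpow_of_nonpos (by linarith) (by linarith) (by linarith)
      · rw [if_neg htA]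
        push_neg at htA
        calc b + c / t ≤ b + c / A := by
              have := div_le_div_of_nonneg_left hc0 hA0 htA.le
              linarith
          _ = (δ + A) ^ (p - 2) := hbca
          _ ≤ (δ + s) ^ (p - 2) :=
              Real.rpow_le_rpow_of_nonpos (by linarith) (by linarith) (by linarith)
    · push_neg at hsA
      rw [if_neg (not_le.mpr hsA), if_neg (not_le.mpr (lt_of_lt_of_le hsA hst))]
      have := div_le_div_of_nonneg_left hc0 (show (0:ℝ) < s by linarith) hst
      linarith
  refine ⟨hmono, fun t ht => ?_⟩
  have h0 : aA p δ A 0 = δ ^ (p - 2) := by simp [aA]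
  have hup : aA p δ A t ≤ δ ^ (p - 2) := h0 ▸ hmono 0 t le_rfl ht
  have hXt : (0:ℝ) < δ + t := by linarith
  have hthird : (p - 1) * (δ + A) ^ (p - 2) ≤ aA p δ A t := by
    rw [aA_eq hδ hA ht]
    by_cases htA : t ≤ A
    · rw [if_pos htA]
      have h1 : (δ + A) ^ (p - 2) ≤ (δ + t) ^ (p - 2) :=
        Real.rpow_le_rpow_of_nonpos hXt (by linarith) (by linarith)
      have h2 : (0:ℝ) < (δ + t) ^ (p - 2) := Real.rpow_pos_of_pos hXt _
      nlinarith
    · rw [if_neg htA]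
      have : 0 ≤ c / t := div_nonneg hc0 ht
      linarith
  refine ⟨?_, hup, hthird⟩
  by_cases htA : t ≤ A
  · rw [aA_eq hδ hA ht, if_pos htA]
    have h2 : (0:ℝ) < (δ + t) ^ (p - 2) := Real.rpow_pos_of_pos hXt _
    nlinarith
  · push_neg at htA
    have h1 : (δ + t) ^ (p - 2) ≤ (δ + A) ^ (p - 2) :=
      Real.rpow_le_rpow_of_nonpos hX (by linarith) (by linarith)
    calc (p - 1) * (δ + t) ^ (p - 2) ≤ (p - 1) * (δ + A) ^ (p - 2) := by nlinarith
      _ ≤ aA p δ A t := hthird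


end
end

section
/- Let p ∈ (1,2], δ > 0 and A ≥ 1, set ω := ω_{p,δ}, a^A(t) := (ω^A)'(t)/t (a^A(0) := δ^{p−2}), F(P) := (δ+|P^sym|)^{(p−2)/2} P^sym and F^A(P) := √(a^A(|P^sym|)) P^sym for P ∈ ℝ^{3×3}. Then there exist constants 0 < c ≤ C depending only on p such that for all P ∈ ℝ^{3×3}: c·ω^A(|P^sym|) ≤ |F^A(P)|² ≤ C·ω^A(|P^sym|), and c·|F(P)|² ≤ |F^A(P)|². -/
open Real Set MeasureTheory Filter Matrix

noncomputable section

abbrev Mat3 := Matrix (Fin 3) (Fin 3) ℝ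

/-- The symmetric part `P^sym = (P + Pᵀ)/2`. -/
def symPart (P : Mat3) : Mat3 := (2:ℝ)⁻¹ • (P + Pᵀ)

/-- Frobenius norm of a 3×3 matrix. -/
def frob (P : Mat3) : ℝ := Real.sqrt (∑ i, ∑ j, (P i j) ^ 2)

/-- Scalar product of matrices `P·Q = Σ_{ij} P_{ij} Q_{ij}`. -/
def dot3 (P Q : Mat3) : ℝ := ∑ i, ∑ j, P i j * Q i j

attribute [local instance] Matrix.frobeniusNormedAddCommGroup Matrix.frobeniusNormedSpace

/-- `F(P) = (δ+|P^sym|)^{(p−2)/2} P^sym`. -/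
def Fp (p δ : ℝ) (P : Mat3) : Mat3 :=
  ((δ + frob (symPart P)) ^ ((p - 2) / 2)) • symPart P

/-- `F^A(P) = √(a^A(|P^sym|)) P^sym`. -/
def FA (p δ A : ℝ) (P : Mat3) : Mat3 :=
  Real.sqrt (aA p δ A (frob (symPart P))) • symPart P
section scalar

variable {p δ A : ℝ} (hp : p ∈ Set.Ioc (1:ℝ) 2) (hδ : 0 < δ) (hA : 1 ≤ A)

lemma contAt {p δ : ℝ} (t : ℝ) (ht : 0 < δ + t) :
    ContinuousAt (fun s : ℝ => (δ + s) ^ (p - 2) * s) t := by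
  have h1 : ContinuousAt (fun s : ℝ => δ + s) t := by fun_prop
  exact (h1.rpow_const (Or.inl ht.ne')).mul continuousAt_id

include hδ in
lemma intInt {t : ℝ} (ht : 0 ≤ t) :
    IntervalIntegrable (fun s : ℝ => (δ + s) ^ (p - 2) * s) volume 0 t := by
  apply ContinuousOn.intervalIntegrable
  intro s hs
  rw [Set.uIcc_of_le ht] at hs
  exact (contAt (δ := δ) s (by linarith [hs.1])).continuousWithinAt

include hδ in
lemma omg_hasDeriv_s8 {t : ℝ} (ht : 0 < t) :
    HasDerivAt (omg p δ) ((δ + t) ^ (p - 2) * t) t := by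
  apply intervalIntegral.integral_hasDerivAt_right (intInt hδ ht.le)
  · exact ContinuousAt.stronglyMeasurableAtFilter (isOpen_Ioi (a := -δ))
      (fun x hx => contAt x (by simp only [mem_Ioi] at hx; linarith)) t (by simp; linarith)
  · exact contAt t (by linarith)

include hp hδ in
lemma f_mono {s t : ℝ} (hs : 0 ≤ s) (hst : s ≤ t) :
    (δ + s) ^ (p - 2) * s ≤ (δ + t) ^ (p - 2) * t := by
  obtain ⟨hp1, hp2⟩ := hp
  have hds : 0 < δ + s := by linarith
  have hdt : 0 < δ + t := by linarith
  have e1 : (δ + s) ^ (p - 2) * s = (δ + s) ^ (p - 1) * (s / (δ + s)) := by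
    rw [show p - 2 = (p-1) - 1 by ring, Real.rpow_sub hds, Real.rpow_one]
    field_simp
  have e2 : (δ + t) ^ (p - 2) * t = (δ + t) ^ (p - 1) * (t / (δ + t)) := by
    rw [show p - 2 = (p-1) - 1 by ring, Real.rpow_sub hdt, Real.rpow_one]
    field_simp
  rw [e1, e2]
  apply mul_le_mul
  · exact Real.rpow_le_rpow hds.le (by linarith) (by linarith)
  · rw [div_le_div_iff₀ hds hdt]; nlinarith
  · positivity
  · positivity

include hp hδ in
lemma omg_le {t : ℝ} (ht : 0 ≤ t) : omg p δ t ≤ (δ + t) ^ (p - 2) * t * t := by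
  have : omg p δ t ≤ ∫ s in (0:ℝ)..t, (δ + t) ^ (p - 2) * t := by
    apply intervalIntegral.integral_mono_on ht (intInt hδ ht)
      (intervalIntegrable_const)
    intro s hs
    exact f_mono hp hδ hs.1 hs.2
  simpa using this.trans_eq (by rw [intervalIntegral.integral_const]; ring_nf)

include hp hδ in
lemma omg_ge {t : ℝ} (ht : 0 ≤ t) : (δ + t) ^ (p - 2) * t * t / 2 ≤ omg p δ t := by
  have hint : IntervalIntegrable (fun s : ℝ => (δ + t) ^ (p - 2) * s) volume 0 t := by
    apply Continuous.intervalIntegrable; fun_prop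
  have key : (∫ s in (0:ℝ)..t, (δ + t) ^ (p - 2) * s) ≤ omg p δ t := by
    apply intervalIntegral.integral_mono_on ht hint (intInt hδ ht)
    intro s hs
    have hds : 0 < δ + s := by linarith [hs.1]
    have hdt : 0 < δ + t := by linarith
    have : (δ + t) ^ (p - 2) ≤ (δ + s) ^ (p - 2) :=
      Real.rpow_le_rpow_of_nonpos hds (by linarith [hs.2]) (by linarith [hp.2])
    exact mul_le_mul_of_nonneg_right this hs.1
  calc (δ + t) ^ (p - 2) * t * t / 2
      = ∫ s in (0:ℝ)..t, (δ + t) ^ (p - 2) * s := by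
        rw [intervalIntegral.integral_const_mul, integral_id]; ring
    _ ≤ omg p δ t := key

include hδ in
lemma f_hasDeriv {t : ℝ} (ht : 0 < t) :
    HasDerivAt (fun s : ℝ => (δ + s) ^ (p - 2) * s)
      ((p - 2) * (δ + t) ^ (p - 3) * t + (δ + t) ^ (p - 2)) t := by
  have h1 : HasDerivAt (fun s : ℝ => δ + s) 1 t := by
    simpa using (hasDerivAt_id t).const_add δ
  have h2 : HasDerivAt (fun s : ℝ => (δ + s) ^ (p - 2))
      (1 * (p - 2) * (δ + t) ^ (p - 2 - 1)) t :=
    h1.rpow_const (Or.inl (by positivity))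
  have h3 := h2.mul (hasDerivAt_id t)
  refine h3.congr_deriv ?_
  simp only [id]
  rw [show p - 2 - 1 = p - 3 by ring]
  ring

include hδ hA in
lemma deriv_omg_A : deriv (omg p δ) A = (δ + A) ^ (p - 2) * A :=
  (omg_hasDeriv_s8 hδ (by linarith)).deriv

include hδ hA in
lemma deriv2_omg_A :
    deriv (deriv (omg p δ)) A = (p - 2) * (δ + A) ^ (p - 3) * A + (δ + A) ^ (p - 2) := by
  have hev : deriv (omg p δ) =ᶠ[nhds A] (fun s : ℝ => (δ + s) ^ (p - 2) * s) := by
    filter_upwards [Ioi_mem_nhds (show (0:ℝ) < A by linarith)] with t ht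
    exact (omg_hasDeriv_s8 hδ ht).deriv
  rw [hev.deriv_eq]
  exact (f_hasDeriv hδ (by linarith)).deriv

include hδ hA in
lemma quad_hasDeriv (t : ℝ) :
    HasDerivAt (fun s : ℝ => (1/2) * deriv (deriv (omg p δ)) A * s ^ 2
      + (deriv (omg p δ) A - deriv (deriv (omg p δ)) A * A) * s
      + (omg p δ A - deriv (omg p δ) A * A + (1/2) * deriv (deriv (omg p δ)) A * A ^ 2))
      ((δ + A) ^ (p - 2) * A
        + ((p - 2) * (δ + A) ^ (p - 3) * A + (δ + A) ^ (p - 2)) * (t - A)) t := by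
  have h := (((hasDerivAt_pow 2 t).const_mul ((1/2) * deriv (deriv (omg p δ)) A)).add
    ((hasDerivAt_id t).const_mul (deriv (omg p δ) A - deriv (deriv (omg p δ)) A * A))).add_const
    (omg p δ A - deriv (omg p δ) A * A + (1/2) * deriv (deriv (omg p δ)) A * A ^ 2)
  refine h.congr_deriv ?_
  rw [deriv_omg_A hδ hA, deriv2_omg_A hδ hA]
  ring

include hδ hA in
lemma g_hasDeriv {t : ℝ} (ht : 0 < t) :
    HasDerivAt (approxA (omg p δ) A)
      (if t ≤ A then (δ + t) ^ (p - 2) * t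
       else (δ + A) ^ (p - 2) * A
        + ((p - 2) * (δ + A) ^ (p - 3) * A + (δ + A) ^ (p - 2)) * (t - A)) t := by
  rcases lt_trichotomy t A with hlt | heq | hgt
  · rw [if_pos hlt.le]
    apply (omg_hasDeriv_s8 hδ ht).congr_of_eventuallyEq
    filter_upwards [Iio_mem_nhds hlt] with s hs
    exact if_pos (le_of_lt hs)
  · subst heq
    rw [if_pos le_rfl]
    rw [← hasDerivWithinAt_univ, ← Set.Iic_union_Ici (a := t)]
    apply HasDerivWithinAt.union
    · apply ((omg_hasDeriv_s8 hδ ht).hasDerivWithinAt (s := Set.Iic t)).congr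
      · intro s hs; exact if_pos hs
      · exact if_pos le_rfl
    · have h := ((quad_hasDeriv (p := p) hδ hA t).hasDerivWithinAt (s := Set.Ici t))
      simp only [sub_self, mul_zero, add_zero] at h
      apply h.congr
      · intro s hs
        rcases eq_or_lt_of_le (Set.mem_Ici.mp hs) with h' | h'
        · subst h'
          rw [approxA, if_pos le_rfl]; ring
        · rw [approxA, if_neg (not_le.mpr h')]
      · rw [approxA, if_pos le_rfl]; ring
  · rw [if_neg (not_le.mpr hgt)]
    apply (quad_hasDeriv hδ hA t).congr_of_eventuallyEq
    filter_upwards [Ioi_mem_nhds hgt] with s hs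
    exact if_neg (not_le.mpr hs)

include hp hδ hA in
lemma B_bounds :
    (p-1) * (δ + A) ^ (p - 2) ≤ (p - 2) * (δ + A) ^ (p - 3) * A + (δ + A) ^ (p - 2)
    ∧ (p - 2) * (δ + A) ^ (p - 3) * A + (δ + A) ^ (p - 2) ≤ (δ + A) ^ (p - 2) := by
  have hpos : (0:ℝ) < δ + A := by linarith
  have hsplit : (δ + A) ^ (p - 2) = (δ + A) ^ (p - 3) * (δ + A) := by
    rw [show p - 2 = (p-3) + 1 by ring, Real.rpow_add hpos, Real.rpow_one]
  have h3 : (0:ℝ) ≤ (δ + A) ^ (p - 3) := Real.rpow_nonneg hpos.le _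
  constructor
  · rw [hsplit]
    nlinarith [mul_nonneg h3 hδ.le, hp.1, hp.2]
  · rw [hsplit]
    nlinarith [mul_nonneg h3 (show (0:ℝ) ≤ A by linarith), hp.2]

include hp hδ hA in
lemma scalar_main {t : ℝ} (ht : 0 ≤ t) :
    0 ≤ aA p δ A t ∧
    (p-1) * approxA (omg p δ) A t ≤ aA p δ A t * t^2 ∧
    aA p δ A t * t^2 ≤ (2/(p-1)) * approxA (omg p δ) A t ∧
    (p-1) * ((δ + t)^(p-2) * t^2) ≤ aA p δ A t * t^2 := by
  have hp1 := hp.1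
  have hp2 := hp.2
  rcases eq_or_lt_of_le ht with rfl | htp
  · have h0 : omg p δ 0 = 0 := intervalIntegral.integral_same
    have hg0 : approxA (omg p δ) A 0 = 0 := by
      rw [approxA, if_pos (by linarith : (0:ℝ) ≤ A)]; exact h0
    refine ⟨?_, ?_, ?_, ?_⟩ <;>
      simp [aA, hg0, Real.rpow_nonneg hδ.le]
  · -- t > 0
    have hderiv := (g_hasDeriv (p := p) hδ hA htp).deriv
    have haA : aA p δ A t = (if t ≤ A then (δ + t) ^ (p - 2) * t
       else (δ + A) ^ (p - 2) * A
        + ((p - 2) * (δ + A) ^ (p - 3) * A + (δ + A) ^ (p - 2)) * (t - A)) / t := by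
      rw [aA, if_neg htp.ne', hderiv]
    have hsq : ∀ D : ℝ, (D / t) * t ^ 2 = D * t := by
      intro D; field_simp
    by_cases hle : t ≤ A
    · rw [if_pos hle] at haA
      have hgval : approxA (omg p δ) A t = omg p δ t := if_pos hle
      have hL2 := omg_le hp hδ ht
      have hL1 := omg_ge hp hδ ht
      have hX : (0:ℝ) ≤ (δ + t) ^ (p - 2) := Real.rpow_nonneg (by linarith) _
      rw [haA, hsq, hgval]
      refine ⟨by positivity, ?_, ?_, ?_⟩
      · nlinarith [mul_nonneg (mul_nonneg hX ht) ht]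
      · rw [div_mul_eq_mul_div, le_div_iff₀ (by linarith : (0:ℝ) < p - 1)]
        nlinarith [mul_nonneg (mul_nonneg hX ht) ht]
      · nlinarith [mul_nonneg (mul_nonneg hX ht) ht]
    · push_neg at hle
      rw [if_neg (not_le.mpr hle)] at haA
      obtain ⟨hBl, hBu⟩ := B_bounds hp hδ hA
      set r := (δ + A) ^ (p - 2) with hr
      set B := (p - 2) * (δ + A) ^ (p - 3) * A + r with hBdef
      have hr0 : (0:ℝ) ≤ r := by rw [hr]; positivity
      have hB0 : (0:ℝ) ≤ B := le_trans (mul_nonneg (by linarith [hp.1]) hr0) hBl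
      clear_value r B
      have hA0 : (0:ℝ) < A := by linarith
      have hv : (0:ℝ) < t - A := by linarith
      have hgval : approxA (omg p δ) A t
          = omg p δ A + r * A * (t - A) + (1/2) * B * (t - A)^2 := by
        rw [approxA, if_neg (not_le.mpr hle), deriv_omg_A hδ hA, deriv2_omg_A hδ hA,
          hBdef, hr]
        ring
      have hωle : omg p δ A ≤ r * A * A := by
        rw [hr]; exact omg_le hp hδ (by linarith)
      have hωge : r * A * A / 2 ≤ omg p δ A := by
        rw [hr]; exact omg_ge hp hδ (by linarith)
      have hω0 : (0:ℝ) ≤ omg p δ A := by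
        nlinarith [mul_nonneg (mul_nonneg hr0 hA0.le) hA0.le]
      have hD0 : (0:ℝ) ≤ r * A + B * (t - A) :=
        add_nonneg (mul_nonneg hr0 hA0.le) (mul_nonneg hB0 hv.le)
      have hBv2 : (0:ℝ) ≤ B * (t - A)^2 := mul_nonneg hB0 (sq_nonneg _)
      have hrAv : (0:ℝ) ≤ r * A * (t - A) := mul_nonneg (mul_nonneg hr0 hA0.le) hv.le
      have hBvA : (0:ℝ) ≤ B * (t - A) * A := mul_nonneg (mul_nonneg hB0 hv.le) hA0.le
      rw [haA, hsq, hgval]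
      refine ⟨div_nonneg hD0 htp.le, ?_, ?_, ?_⟩
      · have hX0 : (0:ℝ) ≤ omg p δ A + r * A * (t - A) + 1/2 * B * (t - A)^2 := by
          linarith
        have h2p : (0:ℝ) ≤ (2 - p) * (omg p δ A + r * A * (t - A) + 1/2 * B * (t - A)^2) :=
          mul_nonneg (by linarith) hX0
        linarith [hBv2, hrAv, hBvA, hω0, hωle, h2p]
      · rw [div_mul_eq_mul_div, le_div_iff₀ (by linarith : (0:ℝ) < p - 1)]
        have h2p' : (0:ℝ) ≤ (2 - p) * ((r * A + B * (t - A)) * t) :=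
          mul_nonneg (by linarith) (mul_nonneg hD0 htp.le)
        have hBA : B * A * (t - A) ≤ r * A * (t - A) :=
          mul_le_mul_of_nonneg_right
            (mul_le_mul_of_nonneg_right hBu hA0.le) hv.le
        linarith [h2p', hωge, hBA]
      · have hXle : (δ + t) ^ (p - 2) ≤ r := by
          rw [hr]
          exact Real.rpow_le_rpow_of_nonpos (by linarith) (by linarith) (by linarith)
        have hstep : (p-1) * ((δ + t)^(p-2) * t^2) ≤ (p-1) * (r * t^2) := by
          apply mul_le_mul_of_nonneg_left _ (by linarith)
          exact mul_le_mul_of_nonneg_right hXle (by positivity)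
        refine hstep.trans ?_
        have key : (p-1) * r * t ≤ r * A + B * (t - A) := by
          linarith [mul_le_mul_of_nonneg_right hBl hv.le,
            mul_nonneg (mul_nonneg (show (0:ℝ) ≤ 2 - p by linarith) hr0) hA0.le]
        calc (p-1) * (r * t^2) = ((p-1) * r * t) * t := by ring
          _ ≤ (r * A + B * (t - A)) * t := mul_le_mul_of_nonneg_right key htp.le

end scalar

lemma frob_nonneg (P : Mat3) : 0 ≤ frob P := Real.sqrt_nonneg _

lemma frob_sq (P : Mat3) : frob P ^ 2 = ∑ i, ∑ j, (P i j) ^ 2 :=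
  Real.sq_sqrt (by positivity)

lemma frob_smul_sq (c : ℝ) (P : Mat3) : frob (c • P) ^ 2 = c ^ 2 * frob P ^ 2 := by
  rw [frob_sq, frob_sq, Finset.mul_sum]
  congr 1; ext i
  rw [Finset.mul_sum]
  congr 1; ext j
  simp [Matrix.smul_apply, smul_eq_mul]
  ring

/-- For `p ∈ (1,2]` there are constants `0 < c ≤ C` depending only on
`p` such that for all `δ > 0`, `A ≥ 1` and `P ∈ ℝ^{3×3}`:
`c ω^A(|P^sym|) ≤ |F^A(P)|² ≤ C ω^A(|P^sym|)` and `c |F(P)|² ≤ |F^A(P)|²`. -/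
theorem stmt8 (p : ℝ) (hp : p ∈ Set.Ioc (1:ℝ) 2) :
    ∃ c C : ℝ, 0 < c ∧ c ≤ C ∧
      ∀ δ A : ℝ, 0 < δ → 1 ≤ A → ∀ P : Mat3,
        c * approxA (omg p δ) A (frob (symPart P)) ≤ frob (FA p δ A P) ^ 2 ∧
        frob (FA p δ A P) ^ 2 ≤ C * approxA (omg p δ) A (frob (symPart P)) ∧
        c * frob (Fp p δ P) ^ 2 ≤ frob (FA p δ A P) ^ 2 := by
  have hp1 := hp.1
  have hp2 := hp.2
  refine ⟨p - 1, 2 / (p - 1), by linarith, ?_, ?_⟩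
  · rw [le_div_iff₀ (by linarith : (0:ℝ) < p - 1)]
    nlinarith
  · intro δ A hδ hA P
    set t := frob (symPart P) with htdef
    have ht : 0 ≤ t := frob_nonneg _
    obtain ⟨h0, h1, h2, h3⟩ := scalar_main hp hδ hA ht
    have hFA : frob (FA p δ A P) ^ 2 = aA p δ A t * t ^ 2 := by
      rw [FA, frob_smul_sq, Real.sq_sqrt h0]
    have hFp : frob (Fp p δ P) ^ 2 = (δ + t) ^ (p - 2) * t ^ 2 := by
      rw [Fp, frob_smul_sq]
      congr 1
      rw [sq, ← Real.rpow_add (by positivity)]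
      norm_num
      rfl
    rw [hFA, hFp]
    exact ⟨h1, h2, h3⟩


end
end
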